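/- arXiv:1403.5003 — 6 statements merged into one kernel-verified Lean document; each statement's English description precedes it below -/
import Mathlib

section
/- For every finite simple graph G and every natural number ℓ with ℓ ≥ θ'_e(G), the entanglement-assisted compound independence number with ℓ receivers equals the classical independence number: α*_{1,ℓ}(G) = α(G). -/
open scoped BigOperators ComplexOrder
open Matrix

noncomputable section

namespace ZeroError

variable {V W : Type*}

/-- The independence number of a simple graph: the maximum cardinality of a set of
pairwise non-adjacent vertices. -/
def indepNum [Fintype V] (G : SimpleGraph V) : ℕ :=
  sSup {n | ∃ s : Finset V, s.card = n ∧ ∀ u ∈ s, ∀ v ∈ s, u ≠ v → ¬ G.Adj u v}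

/-- The strong product of two simple graphs. -/
def strongProd (G : SimpleGraph V) (H : SimpleGraph W) : SimpleGraph (V × W) where
  Adj x y := x ≠ y ∧ (x.1 = y.1 ∨ G.Adj x.1 y.1) ∧ (x.2 = y.2 ∨ H.Adj x.2 y.2)
  symm := by
    constructor
    rintro x y ⟨hne, h1, h2⟩
    exact ⟨hne.symm, h1.imp Eq.symm (fun a => a.symm), h2.imp Eq.symm (fun a => a.symm)⟩
  loopless := by constructor; rintro x ⟨hne, -⟩; exact hne rfl

/-- The n-fold strong power of a simple graph. -/
def strongPow (G : SimpleGraph V) (n : ℕ) : SimpleGraph (Fin n → V) where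
  Adj u v := u ≠ v ∧ ∀ i, u i = v i ∨ G.Adj (u i) (v i)
  symm := by
    constructor
    rintro u v ⟨hne, h⟩
    exact ⟨hne.symm, fun i => (h i).imp Eq.symm (fun a => a.symm)⟩
  loopless := by constructor; rintro u ⟨hne, -⟩; exact hne rfl

/-- `copies G ℓ` is the disjoint union `G^{+ℓ}` of ℓ copies of `G`. -/
def copies (G : SimpleGraph V) (ℓ : ℕ) : SimpleGraph (V × Fin ℓ) where
  Adj x y := x.2 = y.2 ∧ G.Adj x.1 y.1
  symm := by constructor; rintro x y ⟨h1, h2⟩; exact ⟨h1.symm, h2.symm⟩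
  loopless := by constructor; rintro x ⟨-, h⟩; exact G.loopless.irrefl _ h

/-- The Cartesian product `G □ K_t` of a graph with the complete graph on `t` vertices. -/
def cartProdK (G : SimpleGraph V) (t : ℕ) : SimpleGraph (V × Fin t) where
  Adj x y := (G.Adj x.1 y.1 ∧ x.2 = y.2) ∨ (x.1 = y.1 ∧ x.2 ≠ y.2)
  symm := by
    constructor
    rintro x y (⟨h1, h2⟩ | ⟨h1, h2⟩)
    · exact Or.inl ⟨h1.symm, h2.symm⟩
    · exact Or.inr ⟨h1.symm, h2.symm⟩
  loopless := by constructor; rintro x (⟨h, -⟩ | ⟨-, h⟩); exacts [G.loopless.irrefl _ h, h rfl]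

/-- The chromatic number: the least number of colors of a proper coloring. -/
def chromNum [Fintype V] (G : SimpleGraph V) : ℕ :=
  sInf {m | ∃ c : V → Fin m, ∀ u v, G.Adj u v → c u ≠ c v}

/-- The entanglement-assisted independence number `α*(G)`. -/
def qIndepNum [Fintype V] (G : SimpleGraph V) : ℕ :=
  sSup {m | ∃ (d : ℕ) (ρ : Matrix (Fin d) (Fin d) ℂ)
      (σ : Fin m → V → Matrix (Fin d) (Fin d) ℂ),
    ρ.PosSemidef ∧ ρ.trace = 1 ∧ (∀ i u, (σ i u).PosSemidef) ∧
    (∀ i, ∑ u, σ i u = ρ) ∧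
    ∀ i j u v, i ≠ j → (u = v ∨ G.Adj u v) → σ i u * σ j v = 0}

/-- The entanglement-assisted chromatic number `χ*(G)`. -/
def qChromNum [Fintype V] (G : SimpleGraph V) : ℕ :=
  sInf {m | ∃ (d : ℕ) (ρ : Matrix (Fin d) (Fin d) ℂ)
      (σ : V → Fin m → Matrix (Fin d) (Fin d) ℂ),
    ρ.PosSemidef ∧ ρ.trace = 1 ∧ (∀ x i, (σ x i).PosSemidef) ∧
    (∀ x, ∑ i, σ x i = ρ) ∧
    ∀ x y i, G.Adj x y → σ x i * σ y i = 0}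

/-- The partial trace onto the k-th tensor factor:
`(Tr_{B_{-k}} M)_{a,b} = Σ M_{s,t}` over tuples `s, t` with `s k = a`, `t k = b` and
`s r = t r` for all `r ≠ k`. -/
def ptraceK {d ℓ : ℕ} (k : Fin ℓ)
    (M : Matrix (Fin ℓ → Fin d) (Fin ℓ → Fin d) ℂ) : Matrix (Fin d) (Fin d) ℂ :=
  Matrix.of fun a b => ∑ s : Fin ℓ → Fin d, ∑ t : Fin ℓ → Fin d,
    if s k = a ∧ t k = b ∧ ∀ r, r ≠ k → s r = t r then M s t else 0

/-- The entanglement-assisted compound independence number `α*_{1,ℓ}(G)` with ℓ receivers. -/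
def qCompoundNum [Fintype V] (G : SimpleGraph V) (ℓ : ℕ) : ℕ :=
  sSup {m | ∃ (d : ℕ) (ρ : Matrix (Fin ℓ → Fin d) (Fin ℓ → Fin d) ℂ)
      (σ : Fin m → V → Matrix (Fin ℓ → Fin d) (Fin ℓ → Fin d) ℂ),
    ρ.PosSemidef ∧ ρ.trace = 1 ∧ (∀ i u, (σ i u).PosSemidef) ∧
    (∀ i, ∑ u, σ i u = ρ) ∧
    ∀ (k : Fin ℓ) i j u v, i ≠ j → (u = v ∨ G.Adj u v) →
      ptraceK k (σ i u) * ptraceK k (σ j v) = 0}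

/-- The Shannon capacity `c(G) = sup_{n ≥ 1} (1/n) log₂ α(G^{⊠n})`. -/
def shannonCap [Fintype V] (G : SimpleGraph V) : ℝ :=
  ⨆ n : ℕ+, Real.logb 2 (indepNum (strongPow G (n : ℕ))) / ((n : ℕ) : ℝ)

/-- The entangled Shannon capacity `c*(G) = sup_{n ≥ 1} (1/n) log₂ α*(G^{⊠n})`. -/
def qShannonCap [Fintype V] (G : SimpleGraph V) : ℝ :=
  ⨆ n : ℕ+, Real.logb 2 (qIndepNum (strongPow G (n : ℕ))) / ((n : ℕ) : ℝ)

/-- The entanglement-assisted compound Shannon capacity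
`c*_{1,ℓ}(G) = sup_{n ≥ 1} (1/n) log₂ α*_{1,ℓ}(G^{⊠n})`. -/
def qCompoundCap [Fintype V] (G : SimpleGraph V) (ℓ : ℕ) : ℝ :=
  ⨆ n : ℕ+, Real.logb 2 (qCompoundNum (strongPow G (n : ℕ)) ℓ) / ((n : ℕ) : ℝ)

/-- The edge-clique cover number `θ_e(G)`: the least number of cliques covering all edges. -/
def edgeCliqueCoverNum [Fintype V] (G : SimpleGraph V) : ℕ :=
  sInf {n | ∃ F : Finset (Finset V), F.card = n ∧ (∀ c ∈ F, G.IsClique (c : Set V)) ∧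
    ∀ u v, G.Adj u v → ∃ c ∈ F, u ∈ c ∧ v ∈ c}

/-- `θ'_e(G)`: the edge-clique cover number plus the number of isolated vertices. -/
def thetaPrime [Fintype V] (G : SimpleGraph V) : ℕ :=
  edgeCliqueCoverNum G + {v : V | ∀ u, ¬ G.Adj v u}.ncard

/-- `f` is an orthogonal representation of `G` in dimension `d`. -/
def IsOrthRep (G : SimpleGraph V) (d : ℕ) (f : V → EuclideanSpace ℂ (Fin d)) : Prop :=
  (∀ v, ‖f v‖ = 1) ∧ ∀ u v, G.Adj u v → inner ℂ (f u) (f v) = (0 : ℂ)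

/-- The orthogonal rank `ξ(G)`. -/
def orthRank (G : SimpleGraph V) : ℕ :=
  sInf {d | ∃ f : V → EuclideanSpace ℂ (Fin d), IsOrthRep G d f}

/-- Vertices of the quarter orthogonality graph `Γ_k`: ±1-vectors of length `k+1`
with first coordinate 1 and an even number of -1 entries. -/
def QOVertex (k : ℕ) : Type :=
  {u : Fin (k + 1) → ℤ // (∀ i, u i = 1 ∨ u i = -1) ∧ u 0 = 1 ∧
    Even ((Finset.univ.filter fun i => u i = -1).card)}

instance (k : ℕ) : Fintype (QOVertex k) :=
  Fintype.ofInjective (fun u : QOVertex k => fun i => decide (u.val i = 1))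
    (by
      intro u v h
      apply Subtype.ext; funext i
      have hi := congrFun h i
      rcases u.prop.1 i with h1 | h1 <;> rcases v.prop.1 i with h2 | h2 <;>
        simp [h1, h2] at hi ⊢)

/-- The quarter orthogonality graph `Γ_k`. -/
def quarterOrthGraph (k : ℕ) : SimpleGraph (QOVertex k) where
  Adj u v := u ≠ v ∧ ∑ i, u.val i * v.val i = 0
  symm := by
    constructor
    rintro u v ⟨hne, h⟩
    refine ⟨hne.symm, ?_⟩
    rw [← h]
    exact Finset.sum_congr rfl fun i _ => mul_comm _ _
  loopless := by constructor; rintro u ⟨hne, -⟩; exact hne rfl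

/-- Vertices of the orthogonality graph `Ω_k`: all ±1-vectors of length `k`. -/
def PMVertex (k : ℕ) : Type :=
  {u : Fin k → ℤ // ∀ i, u i = 1 ∨ u i = -1}

instance (k : ℕ) : Fintype (PMVertex k) :=
  Fintype.ofInjective (fun u : PMVertex k => fun i => decide (u.val i = 1))
    (by
      intro u v h
      apply Subtype.ext; funext i
      have hi := congrFun h i
      rcases u.prop i with h1 | h1 <;> rcases v.prop i with h2 | h2 <;>
        simp [h1, h2] at hi ⊢)

/-- The orthogonality graph `Ω_k`. -/
def orthGraph (k : ℕ) : SimpleGraph (PMVertex k) where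
  Adj u v := u ≠ v ∧ ∑ i, u.val i * v.val i = 0
  symm := by
    constructor
    rintro u v ⟨hne, h⟩
    refine ⟨hne.symm, ?_⟩
    rw [← h]
    exact Finset.sum_congr rfl fun i _ => mul_comm _ _
  loopless := by constructor; rintro u ⟨hne, -⟩; exact hne rfl



section AuxProof

variable {n : Type*} [Fintype n] [DecidableEq n]

private lemma posSemidef_sum {ι : Type*} (s : Finset ι) (f : ι → Matrix n n ℂ)
    (h : ∀ i ∈ s, (f i).PosSemidef) : (∑ i ∈ s, f i).PosSemidef := by
  classical
  induction s using Finset.induction_on with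
  | empty => simpa using Matrix.PosSemidef.zero
  | @insert a s ha ih =>
      rw [Finset.sum_insert ha]
      exact (h a (Finset.mem_insert_self _ _)).add
        (ih fun i hi => h i (Finset.mem_insert_of_mem hi))

private lemma isHermitian_sum' {ι : Type*} (s : Finset ι) (f : ι → Matrix n n ℂ)
    (h : ∀ i ∈ s, (f i).IsHermitian) : (∑ i ∈ s, f i).IsHermitian := by
  show (∑ i ∈ s, f i)ᴴ = ∑ i ∈ s, f i
  rw [Matrix.conjTranspose_sum]
  exact Finset.sum_congr rfl fun i hi => (h i hi).eq

open scoped MatrixOrder in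
private lemma psd_eq_conjT_mul_self {A : Matrix n n ℂ} (hA : A.PosSemidef) :
    ∃ B : Matrix n n ℂ, A = Bᴴ * B := by
  obtain ⟨X, hX, -, hXA⟩ :=
    CFC.exists_sqrt_of_isSelfAdjoint_of_quasispectrumRestricts hA.isHermitian
      (QuasispectrumRestricts.nnreal_of_nonneg hA.nonneg)
  refine ⟨X, ?_⟩
  rw [← hXA, ← Matrix.star_eq_conjTranspose, hX.star_eq]

private lemma spec_eq {A : Matrix n n ℂ} (hA : A.IsHermitian) :
    A = (hA.eigenvectorUnitary : Matrix n n ℂ) * Matrix.diagonal (RCLike.ofReal ∘ hA.eigenvalues) *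
      star (hA.eigenvectorUnitary : Matrix n n ℂ) :=
  hA.spectral_theorem

private lemma trace_conjT_nonneg (A : Matrix n n ℂ) : 0 ≤ (Aᴴ * A).trace := by
  simp only [Matrix.trace, Matrix.diag]
  apply Finset.sum_nonneg
  intro j _
  rw [Matrix.mul_apply]
  apply Finset.sum_nonneg
  intro i _
  rw [Matrix.conjTranspose_apply]
  exact star_mul_self_nonneg _

private lemma eq_zero_of_trace_conjT {A : Matrix n n ℂ} (h : (Aᴴ * A).trace = 0) :
    A = 0 := by
  have hnn : ∀ j ∈ (Finset.univ : Finset n), (0:ℂ) ≤ ∑ i, Aᴴ j i * A i j := by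
    intro j _
    apply Finset.sum_nonneg
    intro i _
    rw [Matrix.conjTranspose_apply]
    exact star_mul_self_nonneg _
  simp only [Matrix.trace, Matrix.diag, Matrix.mul_apply] at h
  have h2 := (Finset.sum_eq_zero_iff_of_nonneg hnn).mp h
  ext i j
  have h3 := h2 j (Finset.mem_univ j)
  have hnn2 : ∀ i' ∈ (Finset.univ : Finset n), (0:ℂ) ≤ Aᴴ j i' * A i' j := by
    intro i' _
    rw [Matrix.conjTranspose_apply]
    exact star_mul_self_nonneg _
  have h4 := (Finset.sum_eq_zero_iff_of_nonneg hnn2).mp h3 i (Finset.mem_univ i)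
  rw [Matrix.conjTranspose_apply] at h4
  simpa using (CStarRing.star_mul_self_eq_zero_iff (A i j)).mp h4

private lemma trace_rearrange (M N : Matrix n n ℂ) :
    (Mᴴ * M * (Nᴴ * N)).trace = ((M * Nᴴ)ᴴ * (M * Nᴴ)).trace := by
  have h1 : (M * Nᴴ)ᴴ * (M * Nᴴ) = N * (Mᴴ * M) * Nᴴ := by
    rw [Matrix.conjTranspose_mul, Matrix.conjTranspose_conjTranspose]
    simp only [Matrix.mul_assoc]
  calc (Mᴴ * M * (Nᴴ * N)).trace
      = ((Nᴴ * N) * (Mᴴ * M)).trace := Matrix.trace_mul_comm _ _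
    _ = (N * (Mᴴ * M) * Nᴴ).trace := (Matrix.trace_mul_cycle N (Mᴴ * M) Nᴴ).symm
    _ = ((M * Nᴴ)ᴴ * (M * Nᴴ)).trace := by rw [h1]

private lemma trace_mul_nonneg' {A B : Matrix n n ℂ} (hA : A.PosSemidef)
    (hB : B.PosSemidef) : 0 ≤ (A * B).trace := by
  obtain ⟨M, rfl⟩ := psd_eq_conjT_mul_self hA
  obtain ⟨N, rfl⟩ := psd_eq_conjT_mul_self hB
  rw [trace_rearrange]
  exact trace_conjT_nonneg _

private lemma mul_eq_zero_of_trace_eq_zero {A B : Matrix n n ℂ} (hA : A.PosSemidef)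
    (hB : B.PosSemidef) (h : (A * B).trace = 0) : A * B = 0 := by
  obtain ⟨M, rfl⟩ := psd_eq_conjT_mul_self hA
  obtain ⟨N, rfl⟩ := psd_eq_conjT_mul_self hB
  rw [trace_rearrange] at h
  have h0 : M * Nᴴ = 0 := eq_zero_of_trace_conjT h
  calc Mᴴ * M * (Nᴴ * N) = Mᴴ * (M * Nᴴ) * N := by simp only [Matrix.mul_assoc]
    _ = 0 := by rw [h0, Matrix.mul_zero, Matrix.zero_mul]

private lemma conj_mul_conj (U D1 D2 : Matrix n n ℂ) (hU : star U * U = 1) :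
    (U * D1 * star U) * (U * D2 * star U) = U * (D1 * D2) * star U := by
  calc (U * D1 * star U) * (U * D2 * star U)
      = U * D1 * (star U * U) * (D2 * star U) := by simp only [Matrix.mul_assoc]
    _ = U * (D1 * D2) * star U := by
        rw [hU, Matrix.mul_one]
        simp only [Matrix.mul_assoc]

/-- Support projection of a Hermitian matrix. -/
private noncomputable def suppProj {A : Matrix n n ℂ} (hA : A.IsHermitian) :
    Matrix n n ℂ :=
  (hA.eigenvectorUnitary : Matrix n n ℂ) *
    Matrix.diagonal (fun i => if hA.eigenvalues i = 0 then (0 : ℂ) else 1) *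
    (star (hA.eigenvectorUnitary : Matrix n n ℂ))

private lemma suppProj_posSemidef {A : Matrix n n ℂ} (hA : A.IsHermitian) :
    (suppProj hA).PosSemidef := by
  rw [suppProj, Matrix.star_eq_conjTranspose]
  refine Matrix.PosSemidef.mul_mul_conjTranspose_same ?_ _
  refine Matrix.posSemidef_diagonal_iff.mpr fun i => ?_
  split
  · exact le_refl _
  · exact zero_le_one

private lemma suppProj_mul_self {A : Matrix n n ℂ} (hA : A.IsHermitian) :
    suppProj hA * A = A := by
  have hUU : star (hA.eigenvectorUnitary : Matrix n n ℂ) *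
      (hA.eigenvectorUnitary : Matrix n n ℂ) = 1 :=
    Matrix.mem_unitaryGroup_iff'.mp hA.eigenvectorUnitary.2
  have hDD : Matrix.diagonal (fun i => if hA.eigenvalues i = 0 then (0 : ℂ) else 1) *
      Matrix.diagonal (RCLike.ofReal ∘ hA.eigenvalues) =
      Matrix.diagonal (RCLike.ofReal ∘ hA.eigenvalues) := by
    rw [Matrix.diagonal_mul_diagonal]
    refine congrArg Matrix.diagonal (funext fun i => ?_)
    by_cases h : hA.eigenvalues i = 0
    · simp [h]
    · simp [h]
  calc suppProj hA * A
      = ((hA.eigenvectorUnitary : Matrix n n ℂ) *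
          Matrix.diagonal (fun i => if hA.eigenvalues i = 0 then (0 : ℂ) else 1) *
          (star (hA.eigenvectorUnitary : Matrix n n ℂ))) *
        ((hA.eigenvectorUnitary : Matrix n n ℂ) *
          Matrix.diagonal (RCLike.ofReal ∘ hA.eigenvalues) *
          (star (hA.eigenvectorUnitary : Matrix n n ℂ))) := by
        rw [← spec_eq hA]; rfl
    _ = (hA.eigenvectorUnitary : Matrix n n ℂ) *
          (Matrix.diagonal (fun i => if hA.eigenvalues i = 0 then (0 : ℂ) else 1) *
            Matrix.diagonal (RCLike.ofReal ∘ hA.eigenvalues)) *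
          (star (hA.eigenvectorUnitary : Matrix n n ℂ)) := conj_mul_conj _ _ _ hUU
    _ = A := by rw [hDD, ← spec_eq hA]

private lemma suppProj_idem {A : Matrix n n ℂ} (hA : A.IsHermitian) :
    suppProj hA * suppProj hA = suppProj hA := by
  have hUU : star (hA.eigenvectorUnitary : Matrix n n ℂ) *
      (hA.eigenvectorUnitary : Matrix n n ℂ) = 1 :=
    Matrix.mem_unitaryGroup_iff'.mp hA.eigenvectorUnitary.2
  show ((hA.eigenvectorUnitary : Matrix n n ℂ) *
      Matrix.diagonal (fun i => if hA.eigenvalues i = 0 then (0 : ℂ) else 1) *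
      (star (hA.eigenvectorUnitary : Matrix n n ℂ))) *
    ((hA.eigenvectorUnitary : Matrix n n ℂ) *
      Matrix.diagonal (fun i => if hA.eigenvalues i = 0 then (0 : ℂ) else 1) *
      (star (hA.eigenvectorUnitary : Matrix n n ℂ))) = suppProj hA
  rw [conj_mul_conj _ _ _ hUU, Matrix.diagonal_mul_diagonal, suppProj]
  refine congrArg (fun D => (hA.eigenvectorUnitary : Matrix n n ℂ) * D *
    (star (hA.eigenvectorUnitary : Matrix n n ℂ))) ?_
  refine congrArg Matrix.diagonal (funext fun i => ?_)
  by_cases h : hA.eigenvalues i = 0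
  · simp [h]
  · simp [h]

private lemma suppProj_pinv {A : Matrix n n ℂ} (hA : A.IsHermitian) :
    ∃ Cm : Matrix n n ℂ, suppProj hA = Cm * A ∧ suppProj hA = A * Cm := by
  have hUU : star (hA.eigenvectorUnitary : Matrix n n ℂ) *
      (hA.eigenvectorUnitary : Matrix n n ℂ) = 1 :=
    Matrix.mem_unitaryGroup_iff'.mp hA.eigenvectorUnitary.2
  set U : Matrix n n ℂ := (hA.eigenvectorUnitary : Matrix n n ℂ) with hU
  set pv : n → ℂ := fun i => if hA.eigenvalues i = 0 then (0 : ℂ)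
    else ((RCLike.ofReal (hA.eigenvalues i) : ℂ))⁻¹ with hpv
  refine ⟨U * Matrix.diagonal pv * star U, ?_, ?_⟩
  · calc suppProj hA
        = U * (Matrix.diagonal pv * Matrix.diagonal (RCLike.ofReal ∘ hA.eigenvalues)) *
          star U := by
          rw [Matrix.diagonal_mul_diagonal, suppProj]
          refine congrArg (fun D => U * D * star U) ?_
          refine congrArg Matrix.diagonal (funext fun i => ?_)
          by_cases h : hA.eigenvalues i = 0
          · simp [hpv, h]
          · rw [hpv]
            dsimp only
            rw [if_neg h, if_neg h, Function.comp_apply,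
              inv_mul_cancel₀ (by simpa using h)]
      _ = (U * Matrix.diagonal pv * star U) *
          (U * Matrix.diagonal (RCLike.ofReal ∘ hA.eigenvalues) * star U) :=
          (conj_mul_conj _ _ _ hUU).symm
      _ = (U * Matrix.diagonal pv * star U) * A := by rw [← spec_eq hA]
  · calc suppProj hA
        = U * (Matrix.diagonal (RCLike.ofReal ∘ hA.eigenvalues) * Matrix.diagonal pv) *
          star U := by
          rw [Matrix.diagonal_mul_diagonal, suppProj]
          refine congrArg (fun D => U * D * star U) ?_
          refine congrArg Matrix.diagonal (funext fun i => ?_)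
          by_cases h : hA.eigenvalues i = 0
          · simp [hpv, h]
          · rw [hpv]
            dsimp only
            rw [if_neg h, if_neg h, Function.comp_apply,
              mul_inv_cancel₀ (by simpa using h)]
      _ = (U * Matrix.diagonal (RCLike.ofReal ∘ hA.eigenvalues) * star U) *
          (U * Matrix.diagonal pv * star U) :=
          (conj_mul_conj _ _ _ hUU).symm
      _ = A * (U * Matrix.diagonal pv * star U) := by rw [← spec_eq hA]

private lemma suppProj_mul_eq_zero_left {A B : Matrix n n ℂ} (hA : A.IsHermitian)
    (h : A * B = 0) : suppProj hA * B = 0 := by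
  obtain ⟨Cm, hC, -⟩ := suppProj_pinv hA
  rw [hC, Matrix.mul_assoc, h, Matrix.mul_zero]

private lemma mul_suppProj_eq_zero_right {A B : Matrix n n ℂ} (hB : B.IsHermitian)
    (h : A * B = 0) : A * suppProj hB = 0 := by
  obtain ⟨Cm, -, hC⟩ := suppProj_pinv hB
  rw [hC, ← Matrix.mul_assoc, h, Matrix.zero_mul]

private lemma posSemidef_one_sub {Q : Matrix n n ℂ} (hH : Q.IsHermitian)
    (hidem : Q * Q = Q) : (1 - Q).PosSemidef := by
  refine Matrix.PosSemidef.of_dotProduct_mulVec_nonneg ?_ ?_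
  · exact Matrix.isHermitian_one.sub hH
  · intro x
    have h2 : star (Q *ᵥ x) ⬝ᵥ x = star x ⬝ᵥ (Q *ᵥ x) := by
      rw [Matrix.star_mulVec, ← Matrix.dotProduct_mulVec, hH.eq]
    have h1 : star (Q *ᵥ x) ⬝ᵥ (Q *ᵥ x) = star x ⬝ᵥ (Q *ᵥ x) := by
      rw [Matrix.star_mulVec, ← Matrix.dotProduct_mulVec, Matrix.mulVec_mulVec, hH.eq,
        hidem]
    have key : star x ⬝ᵥ (1 - Q) *ᵥ x = star (x - Q *ᵥ x) ⬝ᵥ (x - Q *ᵥ x) := by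
      rw [Matrix.sub_mulVec, Matrix.one_mulVec, star_sub, sub_dotProduct,
        dotProduct_sub, dotProduct_sub, h1, h2]
      ring
    rw [key]
    exact dotProduct_star_self_nonneg _

/-- Kronecker-type product of `ℓ` matrices, acting on `Fin ℓ → Fin d`. -/
private noncomputable def kron {d ℓ : ℕ} (B : Fin ℓ → Matrix (Fin d) (Fin d) ℂ) :
    Matrix (Fin ℓ → Fin d) (Fin ℓ → Fin d) ℂ :=
  Matrix.of fun s t => ∏ k, B k (s k) (t k)

private lemma kron_apply {d ℓ : ℕ} (B : Fin ℓ → Matrix (Fin d) (Fin d) ℂ)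
    (s t : Fin ℓ → Fin d) : kron B s t = ∏ k, B k (s k) (t k) := rfl

private lemma kron_mul {d ℓ : ℕ} (B C : Fin ℓ → Matrix (Fin d) (Fin d) ℂ) :
    kron B * kron C = kron (fun k => B k * C k) := by
  ext s u
  simp only [Matrix.mul_apply, kron_apply, ← Finset.prod_mul_distrib]
  rw [Finset.prod_univ_sum, Fintype.piFinset_univ]

private lemma sum_kron {d ℓ : ℕ} {β : Type*} [Fintype β]
    (B : Fin ℓ → β → Matrix (Fin d) (Fin d) ℂ) :
    ∑ b : Fin ℓ → β, kron (fun k => B k (b k)) = kron (fun k => ∑ r, B k r) := by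
  classical
  ext s t
  simp only [Matrix.sum_apply, kron_apply]
  rw [Finset.prod_univ_sum, Fintype.piFinset_univ]

private lemma kron_one {d ℓ : ℕ} :
    kron (fun _ : Fin ℓ => (1 : Matrix (Fin d) (Fin d) ℂ)) = 1 := by
  ext s t
  simp only [kron_apply, Matrix.one_apply]
  rw [Fintype.prod_boole]
  by_cases h : s = t
  · subst h; simp
  · rw [if_neg (fun hall => h (funext fun k => hall k)), if_neg h]

private lemma kron_conjTranspose {d ℓ : ℕ} (B : Fin ℓ → Matrix (Fin d) (Fin d) ℂ) :
    (kron B)ᴴ = kron (fun k => (B k)ᴴ) := by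
  ext s t
  simp only [Matrix.conjTranspose_apply, kron_apply, star_prod]

private lemma kron_posSemidef {d ℓ : ℕ} (B : Fin ℓ → Matrix (Fin d) (Fin d) ℂ)
    (hB : ∀ k, (B k).PosSemidef) : (kron B).PosSemidef := by
  choose N hN using fun k => psd_eq_conjT_mul_self (hB k)
  have hkey : kron B = (kron N)ᴴ * kron N := by
    rw [kron_conjTranspose, kron_mul]
    exact congrArg kron (funext fun k => hN k)
  rw [hkey]
  exact Matrix.posSemidef_conjTranspose_mul_self _

/-- `B` placed at tensor factor `k`, identity elsewhere. -/
private noncomputable def liftK {d ℓ : ℕ} (k : Fin ℓ) (B : Matrix (Fin d) (Fin d) ℂ) :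
    Matrix (Fin ℓ → Fin d) (Fin ℓ → Fin d) ℂ :=
  kron (fun r => if r = k then B else 1)

private lemma liftK_posSemidef {d ℓ : ℕ} (k : Fin ℓ) {B : Matrix (Fin d) (Fin d) ℂ}
    (hB : B.PosSemidef) : (liftK k B).PosSemidef :=
  kron_posSemidef _ fun r => by
    split
    · exact hB
    · exact Matrix.PosSemidef.one

private lemma liftK_apply {d ℓ : ℕ} (k : Fin ℓ) (B : Matrix (Fin d) (Fin d) ℂ)
    (s t : Fin ℓ → Fin d) :
    liftK k B s t = if (∀ r, r ≠ k → s r = t r) then B (s k) (t k) else 0 := by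
  classical
  show (∏ r, (if r = k then B else 1) (s r) (t r)) = _
  rw [Fintype.prod_eq_mul_prod_compl k, if_pos rfl]
  have h2 : ∏ r ∈ ({k}ᶜ : Finset (Fin ℓ)), (if r = k then B else 1) (s r) (t r)
      = ∏ r ∈ ({k}ᶜ : Finset (Fin ℓ)), (if s r = t r then (1:ℂ) else 0) :=
    Finset.prod_congr rfl fun r hr => by
      rw [if_neg (show r ≠ k by simpa using hr)]
      exact Matrix.one_apply
  rw [h2, Finset.prod_boole]
  by_cases hE : ∀ r, r ≠ k → s r = t r
  · rw [if_pos (fun r hr => hE r (by simpa using hr)), if_pos hE, mul_one]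
  · rw [if_neg, if_neg hE, mul_zero]
    intro hall
    exact hE fun r hr => hall r (by simpa using hr)

private lemma ptraceK_zero {d ℓ : ℕ} (k : Fin ℓ) :
    ptraceK k (0 : Matrix (Fin ℓ → Fin d) (Fin ℓ → Fin d) ℂ) = 0 := by
  ext a b
  simp [ptraceK]

private lemma ptraceK_isHermitian {d ℓ : ℕ} (k : Fin ℓ)
    {M : Matrix (Fin ℓ → Fin d) (Fin ℓ → Fin d) ℂ} (hM : M.IsHermitian) :
    (ptraceK k M).IsHermitian := by
  classical
  ext a b
  show star (ptraceK k M b a) = ptraceK k M a b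
  calc star (∑ s : Fin ℓ → Fin d, ∑ t : Fin ℓ → Fin d,
        if s k = b ∧ t k = a ∧ (∀ r, r ≠ k → s r = t r) then M s t else 0)
      = ∑ s : Fin ℓ → Fin d, ∑ t : Fin ℓ → Fin d,
        (if s k = b ∧ t k = a ∧ (∀ r, r ≠ k → s r = t r) then M t s else 0) := by
        rw [star_sum]
        refine Finset.sum_congr rfl fun s _ => ?_
        rw [star_sum]
        refine Finset.sum_congr rfl fun t _ => ?_
        rw [apply_ite star, star_zero]
        congr 1
        rw [← Matrix.conjTranspose_apply, hM.eq]
    _ = ∑ t : Fin ℓ → Fin d, ∑ s : Fin ℓ → Fin d,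
        (if s k = b ∧ t k = a ∧ (∀ r, r ≠ k → s r = t r) then M t s else 0) :=
        Finset.sum_comm
    _ = ptraceK k M a b := by
        refine Finset.sum_congr rfl fun t _ => Finset.sum_congr rfl fun s _ => ?_
        refine if_congr ?_ rfl rfl
        constructor
        · rintro ⟨h1, h2, h3⟩
          exact ⟨h2, h1, fun r hr => (h3 r hr).symm⟩
        · rintro ⟨h1, h2, h3⟩
          exact ⟨h2, h1, fun r hr => (h3 r hr).symm⟩

private lemma trace_liftK_mul {d ℓ : ℕ} (k : Fin ℓ) (B : Matrix (Fin d) (Fin d) ℂ)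
    (M : Matrix (Fin ℓ → Fin d) (Fin ℓ → Fin d) ℂ) :
    (liftK k B * M).trace = (B * ptraceK k M).trace := by
  classical
  have hL : (liftK k B * M).trace =
      ∑ s : Fin ℓ → Fin d, ∑ t : Fin ℓ → Fin d,
        if (∀ r, r ≠ k → s r = t r) then B (s k) (t k) * M t s else 0 := by
    simp only [Matrix.trace, Matrix.diag, Matrix.mul_apply]
    refine Finset.sum_congr rfl fun s _ => Finset.sum_congr rfl fun t _ => ?_
    rw [liftK_apply, ite_mul, zero_mul]
  have hR : (B * ptraceK k M).trace =
      ∑ a : Fin d, ∑ c : Fin d, ∑ s : Fin ℓ → Fin d, ∑ t : Fin ℓ → Fin d,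
        if s k = c ∧ t k = a ∧ (∀ r, r ≠ k → s r = t r) then B a c * M s t else 0 := by
    simp only [Matrix.trace, Matrix.diag, Matrix.mul_apply]
    refine Finset.sum_congr rfl fun a _ => Finset.sum_congr rfl fun c _ => ?_
    show B a c * ptraceK k M c a = _
    show B a c * (∑ s : Fin ℓ → Fin d, ∑ t : Fin ℓ → Fin d,
      if s k = c ∧ t k = a ∧ (∀ r, r ≠ k → s r = t r) then M s t else 0) = _
    rw [Finset.mul_sum]
    refine Finset.sum_congr rfl fun s _ => ?_
    rw [Finset.mul_sum]
    refine Finset.sum_congr rfl fun t _ => ?_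
    rw [mul_ite, mul_zero]
  rw [hL, hR]
  have hR2 : (∑ a : Fin d, ∑ c : Fin d, ∑ s : Fin ℓ → Fin d, ∑ t : Fin ℓ → Fin d,
        if s k = c ∧ t k = a ∧ (∀ r, r ≠ k → s r = t r) then B a c * M s t else 0)
      = ∑ s : Fin ℓ → Fin d, ∑ t : Fin ℓ → Fin d,
        if (∀ r, r ≠ k → s r = t r) then B (t k) (s k) * M s t else 0 := by
    calc (∑ a : Fin d, ∑ c : Fin d, ∑ s : Fin ℓ → Fin d, ∑ t : Fin ℓ → Fin d,
          if s k = c ∧ t k = a ∧ (∀ r, r ≠ k → s r = t r) then B a c * M s t else 0)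
        = ∑ a : Fin d, ∑ s : Fin ℓ → Fin d, ∑ c : Fin d, ∑ t : Fin ℓ → Fin d,
          if s k = c ∧ t k = a ∧ (∀ r, r ≠ k → s r = t r) then B a c * M s t else 0 :=
          Finset.sum_congr rfl fun a _ => Finset.sum_comm
      _ = ∑ s : Fin ℓ → Fin d, ∑ a : Fin d, ∑ c : Fin d, ∑ t : Fin ℓ → Fin d,
          if s k = c ∧ t k = a ∧ (∀ r, r ≠ k → s r = t r) then B a c * M s t else 0 :=
          Finset.sum_comm
      _ = ∑ s : Fin ℓ → Fin d, ∑ a : Fin d, ∑ t : Fin ℓ → Fin d, ∑ c : Fin d,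
          if s k = c ∧ t k = a ∧ (∀ r, r ≠ k → s r = t r) then B a c * M s t else 0 :=
          Finset.sum_congr rfl fun s _ => Finset.sum_congr rfl fun a _ =>
            Finset.sum_comm
      _ = ∑ s : Fin ℓ → Fin d, ∑ t : Fin ℓ → Fin d, ∑ a : Fin d, ∑ c : Fin d,
          if s k = c ∧ t k = a ∧ (∀ r, r ≠ k → s r = t r) then B a c * M s t else 0 :=
          Finset.sum_congr rfl fun s _ => Finset.sum_comm
      _ = ∑ s : Fin ℓ → Fin d, ∑ t : Fin ℓ → Fin d,
          if (∀ r, r ≠ k → s r = t r) then B (t k) (s k) * M s t else 0 := by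
          refine Finset.sum_congr rfl fun s _ => Finset.sum_congr rfl fun t _ => ?_
          by_cases hE : ∀ r, r ≠ k → s r = t r
          · rw [if_pos hE]
            have hsplit : ∀ a c : Fin d,
                (if s k = c ∧ t k = a ∧ (∀ r, r ≠ k → s r = t r)
                  then B a c * M s t else 0)
                = if c = s k then (if a = t k then B a c * M s t else 0) else 0 := by
              intro a c
              by_cases h2 : c = s k
              · by_cases h1 : a = t k
                · rw [if_pos ⟨h2.symm, h1.symm, hE⟩, if_pos h2, if_pos h1]
                · rw [if_neg (fun hcon => h1 hcon.2.1.symm), if_pos h2, if_neg h1]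
              · rw [if_neg (fun hcon => h2 hcon.1.symm), if_neg h2]
            simp only [hsplit, Fintype.sum_ite_eq']
          · rw [if_neg hE]
            apply Finset.sum_eq_zero
            intro a _
            apply Finset.sum_eq_zero
            intro c _
            rw [if_neg]
            rintro ⟨-, -, h⟩
            exact hE h
  rw [hR2, Finset.sum_comm]
  refine Finset.sum_congr rfl fun t _ => Finset.sum_congr rfl fun s _ => ?_
  refine if_congr ?_ rfl rfl
  constructor
  · intro h r hr
    exact (h r hr).symm
  · intro h r hr
    exact (h r hr).symm

private lemma le_indepNum_aux {V : Type} [Fintype V] [DecidableEq V]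
    (G : SimpleGraph V) (ℓ : ℕ) (C : Fin ℓ → Finset V)
    (hCcl : ∀ k : Fin ℓ, ∀ u ∈ C k, ∀ v ∈ C k, u = v ∨ G.Adj u v)
    (hCcov : ∀ u v : V, u = v ∨ G.Adj u v → ∃ k : Fin ℓ, u ∈ C k ∧ v ∈ C k)
    {m : ℕ}
    (hm : ∃ (d : ℕ) (ρ : Matrix (Fin ℓ → Fin d) (Fin ℓ → Fin d) ℂ)
      (σ : Fin m → V → Matrix (Fin ℓ → Fin d) (Fin ℓ → Fin d) ℂ),
      ρ.PosSemidef ∧ ρ.trace = 1 ∧ (∀ i u, (σ i u).PosSemidef) ∧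
      (∀ i, ∑ u, σ i u = ρ) ∧
      ∀ (k : Fin ℓ) i j u v, i ≠ j → (u = v ∨ G.Adj u v) →
        ptraceK k (σ i u) * ptraceK k (σ j v) = 0) :
    ∃ s : Finset V, s.card = m ∧ ∀ u ∈ s, ∀ v ∈ s, u ≠ v → ¬ G.Adj u v := by
  classical
  obtain ⟨d, ρ, σ, hρ, hρtr, hσ, hsumσ, horth⟩ := hm
  have hτH : ∀ (k : Fin ℓ) (i : Fin m),
      (∑ u ∈ C k, ptraceK k (σ i u)).IsHermitian := fun k i =>
    isHermitian_sum' _ _ fun u _ => ptraceK_isHermitian k (hσ i u).1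
  have hτorth : ∀ (k : Fin ℓ) (i j : Fin m), i ≠ j →
      (∑ u ∈ C k, ptraceK k (σ i u)) * (∑ u ∈ C k, ptraceK k (σ j u)) = 0 := by
    intro k i j hij
    rw [Finset.sum_mul_sum]
    apply Finset.sum_eq_zero
    intro u hu
    apply Finset.sum_eq_zero
    intro v hv
    exact horth k i j u v hij (hCcl k u hu v hv)
  let P : Fin ℓ → Fin m → Matrix (Fin d) (Fin d) ℂ := fun k i => suppProj (hτH k i)
  have hPτ : ∀ k i, P k i * (∑ u ∈ C k, ptraceK k (σ i u))
      = ∑ u ∈ C k, ptraceK k (σ i u) := fun k i => suppProj_mul_self (hτH k i)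
  have hPτ0 : ∀ k i j, i ≠ j → P k i * (∑ u ∈ C k, ptraceK k (σ j u)) = 0 :=
    fun k i j hij => suppProj_mul_eq_zero_left (hτH k i) (hτorth k i j hij)
  have hPP : ∀ k i j, i ≠ j → P k i * P k j = 0 := fun k i j hij =>
    mul_suppProj_eq_zero_right (hτH k j) (hPτ0 k i j hij)
  let Blk : Fin ℓ → Option (Fin m) → Matrix (Fin d) (Fin d) ℂ := fun k o =>
    Option.elim o (1 - ∑ i, P k i) (fun i => P k i)
  have hQH : ∀ k, (∑ i, P k i).IsHermitian := fun k =>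
    isHermitian_sum' _ _ fun i _ => (suppProj_posSemidef (hτH k i)).1
  have hQidem : ∀ k, (∑ i, P k i) * (∑ i, P k i) = ∑ i, P k i := by
    intro k
    rw [Finset.sum_mul_sum]
    refine Finset.sum_congr rfl fun i _ => ?_
    rw [Finset.sum_eq_single i (fun j _ hji => hPP k i j (Ne.symm hji))
      (fun h => absurd (Finset.mem_univ i) h)]
    exact suppProj_idem (hτH k i)
  have hBlkPSD : ∀ k o, (Blk k o).PosSemidef := by
    intro k o
    cases o with
    | none => exact posSemidef_one_sub (hQH k) (hQidem k)
    | some i => exact suppProj_posSemidef (hτH k i)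
  have hBlkSum : ∀ k, ∑ o : Option (Fin m), Blk k o = 1 := by
    intro k
    rw [Fintype.sum_option]
    show (1 - ∑ i, P k i) + ∑ i, P k i = 1
    abel
  have hBlkτ : ∀ (k : Fin ℓ) (o : Option (Fin m)) (i : Fin m), o ≠ some i →
      Blk k o * (∑ u ∈ C k, ptraceK k (σ i u)) = 0 := by
    intro k o i ho
    cases o with
    | some j =>
        exact hPτ0 k j i (fun h => ho (by rw [h]))
    | none =>
        show (1 - ∑ j, P k j) * (∑ u ∈ C k, ptraceK k (σ i u)) = 0
        rw [Matrix.sub_mul, Matrix.one_mul, Finset.sum_mul,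
          Finset.sum_eq_single i (fun j _ hji => hPτ0 k j i hji)
            (fun h => absurd (Finset.mem_univ i) h),
          hPτ, sub_self]
  have hsum1 : ∑ b : Fin ℓ → Option (Fin m),
      (kron (fun k => Blk k (b k)) * ρ).trace = 1 := by
    rw [← Matrix.trace_sum, ← Finset.sum_mul, sum_kron,
      show (fun k => ∑ o : Option (Fin m), Blk k o)
        = fun _ : Fin ℓ => (1 : Matrix (Fin d) (Fin d) ℂ) from funext hBlkSum,
      kron_one, Matrix.one_mul, hρtr]
  obtain ⟨b, -, hb⟩ := Finset.exists_ne_zero_of_sum_ne_zero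
    (by rw [hsum1]; exact one_ne_zero)
  have hpick : ∀ i : Fin m, ∃ u : V, (kron (fun k => Blk k (b k)) * σ i u).trace ≠ 0 := by
    intro i
    have hsum2 : ∑ u : V, (kron (fun k => Blk k (b k)) * σ i u).trace
        = (kron (fun k => Blk k (b k)) * ρ).trace := by
      rw [← Matrix.trace_sum, ← Finset.mul_sum, hsumσ i]
    obtain ⟨u, -, hu⟩ := Finset.exists_ne_zero_of_sum_ne_zero
      (by rw [hsum2]; exact hb)
    exact ⟨u, hu⟩
  choose g hg using hpick
  have hkey : ∀ (k : Fin ℓ) (i : Fin m), g i ∈ C k → b k = some i := by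
    intro k i hmem
    by_contra hne
    apply hg i
    have hB0 : Blk k (b k) * (∑ u ∈ C k, ptraceK k (σ i u)) = 0 := hBlkτ k (b k) i hne
    have hsum0 : ∑ u ∈ C k, (liftK k (Blk k (b k)) * σ i u).trace = 0 := by
      rw [Finset.sum_congr rfl fun u _ => trace_liftK_mul k (Blk k (b k)) (σ i u),
        ← Matrix.trace_sum, ← Finset.mul_sum, hB0, Matrix.trace_zero]
    have hnn : ∀ u ∈ C k, 0 ≤ (liftK k (Blk k (b k)) * σ i u).trace := fun u _ =>
      trace_mul_nonneg' (liftK_posSemidef k (hBlkPSD k (b k))) (hσ i u)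
    have h0 : (liftK k (Blk k (b k)) * σ i (g i)).trace = 0 :=
      (Finset.sum_eq_zero_iff_of_nonneg hnn).mp hsum0 (g i) hmem
    have hm0 : liftK k (Blk k (b k)) * σ i (g i) = 0 :=
      mul_eq_zero_of_trace_eq_zero (liftK_posSemidef k (hBlkPSD k (b k))) (hσ i (g i)) h0
    have hfact : kron (fun r => Blk r (b r))
        = kron (fun r => if r = k then 1 else Blk r (b r)) * liftK k (Blk k (b k)) := by
      show kron (fun r => Blk r (b r))
        = kron (fun r => if r = k then 1 else Blk r (b r)) *
          kron (fun r => if r = k then Blk k (b k) else 1)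
      rw [kron_mul]
      refine congrArg kron (funext fun r => ?_)
      by_cases hrk : r = k
      · rw [if_pos hrk, if_pos hrk, Matrix.one_mul, hrk]
      · rw [if_neg hrk, if_neg hrk, Matrix.mul_one]
    rw [hfact, Matrix.mul_assoc, hm0, Matrix.mul_zero, Matrix.trace_zero]
  have hginj : Function.Injective g := by
    intro i j hgij
    by_contra hij
    obtain ⟨k, hik, hjk⟩ := hCcov (g i) (g j) (Or.inl hgij)
    have h1 := hkey k i hik
    have h2 := hkey k j hjk
    exact hij (Option.some_inj.mp (h1.symm.trans h2))
  refine ⟨Finset.image g Finset.univ, ?_, ?_⟩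
  · rw [Finset.card_image_of_injective _ hginj, Finset.card_univ, Fintype.card_fin]
  · intro u hu v hv huv hadj
    obtain ⟨i, -, rfl⟩ := Finset.mem_image.mp hu
    obtain ⟨j, -, rfl⟩ := Finset.mem_image.mp hv
    have hij : i ≠ j := fun h => huv (by rw [h])
    obtain ⟨k, hik, hjk⟩ := hCcov (g i) (g j) (Or.inr hadj)
    have h1 := hkey k i hik
    have h2 := hkey k j hjk
    exact hij (Option.some_inj.mp (h1.symm.trans h2))

end AuxProof

/-- For every finite simple graph `G` and every `ℓ ≥ θ'_e(G)`, the
entanglement-assisted compound independence number with ℓ receivers equals the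
classical independence number: `α*_{1,ℓ}(G) = α(G)`. -/
theorem entangled_compound_eq_classical_of_many_receivers
    {V : Type} [Fintype V] (G : SimpleGraph V) (ℓ : ℕ)
    (hℓ : thetaPrime G ≤ ℓ) :
    qCompoundNum G ℓ = indepNum G := by
  classical
  -- the independence-number set
  set S : Set ℕ :=
    {n | ∃ s : Finset V, s.card = n ∧ ∀ u ∈ s, ∀ v ∈ s, u ≠ v → ¬ G.Adj u v} with hSdef
  have hind : indepNum G = sSup S := rfl
  have hSne : S.Nonempty := ⟨0, ∅, by simp, by simp⟩
  have hSbdd : BddAbove S := by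
    refine ⟨Fintype.card V, ?_⟩
    rintro n ⟨s, rfl, -⟩
    exact Finset.card_le_univ s
  have hSmem : indepNum G ∈ S := by
    rw [hind]
    exact Nat.sSup_mem hSne hSbdd
  -- an optimal edge clique cover
  obtain ⟨F, hFcard, hFcl, hFcov⟩ :
      ∃ F : Finset (Finset V), F.card = edgeCliqueCoverNum G ∧
        (∀ c ∈ F, G.IsClique (c : Set V)) ∧
        ∀ u v, G.Adj u v → ∃ c ∈ F, u ∈ c ∧ v ∈ c := by
    have hne : {n | ∃ F : Finset (Finset V), F.card = n ∧
        (∀ c ∈ F, G.IsClique (c : Set V)) ∧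
        ∀ u v, G.Adj u v → ∃ c ∈ F, u ∈ c ∧ v ∈ c}.Nonempty := by
      refine ⟨_, (Finset.univ.filter fun p : V × V => G.Adj p.1 p.2).image
        (fun p => ({p.1, p.2} : Finset V)), rfl, ?_, ?_⟩
      · intro c hc
        simp only [Finset.mem_image, Finset.mem_filter] at hc
        obtain ⟨p, ⟨-, hadj⟩, rfl⟩ := hc
        intro x hx y hy hxy
        simp only [Finset.coe_insert, Set.mem_insert_iff, Finset.coe_singleton,
          Set.mem_singleton_iff] at hx hy
        rcases hx with rfl | rfl <;> rcases hy with rfl | rfl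
        · exact absurd rfl hxy
        · exact hadj
        · exact hadj.symm
        · exact absurd rfl hxy
      · intro u v huv
        exact ⟨{u, v}, Finset.mem_image.mpr ⟨(u, v),
          Finset.mem_filter.mpr ⟨Finset.mem_univ _, huv⟩, rfl⟩,
          Finset.mem_insert_self _ _, Finset.mem_insert_of_mem (Finset.mem_singleton_self _)⟩
    exact Nat.sInf_mem hne
  -- the isolated vertices
  have hIfin : {v : V | ∀ u, ¬ G.Adj v u}.Finite := Set.toFinite _
  -- the list of cliques: edge clique cover plus singletons of isolated vertices
  set L : List (Finset V) :=
    F.toList ++ (hIfin.toFinset.toList.map (fun w => ({w} : Finset V))) with hLdef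
  have hLlen : L.length ≤ ℓ := by
    rw [hLdef, List.length_append, List.length_map, Finset.length_toList,
      Finset.length_toList, hFcard]
    calc edgeCliqueCoverNum G + hIfin.toFinset.card = thetaPrime G := by
          rw [thetaPrime]
          congr 1
          exact (Set.ncard_eq_toFinset_card _ hIfin).symm
      _ ≤ ℓ := hℓ
  set C : Fin ℓ → Finset V := fun k => L.getD k.val ∅ with hCdef
  have hCget : ∀ c ∈ L, ∃ k : Fin ℓ, C k = c := by
    intro c hc
    obtain ⟨idx, hidx, hval⟩ := List.mem_iff_getElem.mp hc
    refine ⟨⟨idx, lt_of_lt_of_le hidx hLlen⟩, ?_⟩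
    rw [hCdef]
    simp only
    rw [List.getD_eq_getElem _ _ hidx]
    exact hval
  have hCcl : ∀ k : Fin ℓ, ∀ u ∈ C k, ∀ v ∈ C k, u = v ∨ G.Adj u v := by
    intro k u hu v hv
    by_cases hlt : (k : ℕ) < L.length
    · have hmemL : C k ∈ L := by
        rw [hCdef]
        simp only
        rw [List.getD_eq_getElem _ _ hlt]
        exact List.getElem_mem _
      rcases List.mem_append.mp hmemL with hF | hI
      · have hcF : C k ∈ F := Finset.mem_toList.mp hF
        by_cases huv : u = v
        · exact Or.inl huv
        · exact Or.inr (hFcl _ hcF hu hv huv)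
      · obtain ⟨w, -, hw⟩ := List.mem_map.mp hI
        rw [← hw] at hu hv
        rw [Finset.mem_singleton] at hu hv
        exact Or.inl (hu.trans hv.symm)
    · exfalso
      have hempty : C k = ∅ := by
        rw [hCdef]
        simp only
        exact List.getD_eq_default _ _ (le_of_not_gt hlt)
      rw [hempty] at hu
      exact absurd hu (Finset.notMem_empty u)
  have hCcov : ∀ u v : V, u = v ∨ G.Adj u v → ∃ k : Fin ℓ, u ∈ C k ∧ v ∈ C k := by
    intro u v huv
    rcases huv with rfl | hadj
    · by_cases hiso : ∀ x, ¬ G.Adj u x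
      · have hmemL : ({u} : Finset V) ∈ L := by
          rw [hLdef]
          refine List.mem_append.mpr (Or.inr ?_)
          exact List.mem_map.mpr ⟨u, Finset.mem_toList.mpr (hIfin.mem_toFinset.mpr hiso), rfl⟩
        obtain ⟨k, hk⟩ := hCget _ hmemL
        exact ⟨k, by rw [hk]; exact Finset.mem_singleton_self u,
          by rw [hk]; exact Finset.mem_singleton_self u⟩
      · push_neg at hiso
        obtain ⟨x, hx⟩ := hiso
        obtain ⟨c, hcF, hu, -⟩ := hFcov u x hx
        obtain ⟨k, hk⟩ := hCget c
          (by rw [hLdef]; exact List.mem_append.mpr (Or.inl (Finset.mem_toList.mpr hcF)))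
        exact ⟨k, hk ▸ hu, hk ▸ hu⟩
    · obtain ⟨c, hcF, hu, hv⟩ := hFcov u v hadj
      obtain ⟨k, hk⟩ := hCget c
        (by rw [hLdef]; exact List.mem_append.mpr (Or.inl (Finset.mem_toList.mpr hcF)))
      exact ⟨k, hk ▸ hu, hk ▸ hv⟩
  -- the quantum set
  set Q : Set ℕ :=
    {m | ∃ (d : ℕ) (ρ : Matrix (Fin ℓ → Fin d) (Fin ℓ → Fin d) ℂ)
        (σ : Fin m → V → Matrix (Fin ℓ → Fin d) (Fin ℓ → Fin d) ℂ),
      ρ.PosSemidef ∧ ρ.trace = 1 ∧ (∀ i u, (σ i u).PosSemidef) ∧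
      (∀ i, ∑ u, σ i u = ρ) ∧
      ∀ (k : Fin ℓ) i j u v, i ≠ j → (u = v ∨ G.Adj u v) →
        ptraceK k (σ i u) * ptraceK k (σ j v) = 0} with hQdef
  have hq : qCompoundNum G ℓ = sSup Q := rfl
  -- upper bound: every member of Q is at most the independence number
  have hub : ∀ m' ∈ Q, m' ≤ indepNum G := by
    intro m' hm'
    obtain ⟨s, hscard, hsind⟩ := le_indepNum_aux G ℓ C hCcl hCcov hm'
    rw [hind]
    exact le_csSup hSbdd ⟨s, hscard, hsind⟩
  -- lower bound: the independence number is in Q via the classical strategy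
  have hαmem : indepNum G ∈ Q := by
    obtain ⟨s, hscard, hsind⟩ := hSmem
    let e : s ≃ Fin (indepNum G) := Finset.equivFinOfCardEq hscard
    let w : Fin (indepNum G) → V := fun i => (e.symm i : V)
    have hwmem : ∀ i, w i ∈ s := fun i => (e.symm i).2
    have hwinj : Function.Injective w := fun i j h =>
      e.symm.injective (Subtype.ext h)
    refine ⟨1, 1, fun i u => if u = w i then 1 else 0, Matrix.PosSemidef.one, ?_, ?_, ?_, ?_⟩
    · rw [Matrix.trace_one]
      have hcard1 : Fintype.card (Fin ℓ → Fin 1) = 1 := by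
        simp [Fintype.card_pi]
      rw [hcard1, Nat.cast_one]
    · intro i u
      dsimp only
      split
      · exact Matrix.PosSemidef.one
      · exact Matrix.PosSemidef.zero
    · intro i
      exact Fintype.sum_ite_eq' (w i) (fun _ => (1 : Matrix (Fin ℓ → Fin 1) (Fin ℓ → Fin 1) ℂ))
    · intro k i j u v hij hcon
      dsimp only
      by_cases hu : u = w i
      · by_cases hv : v = w j
        · exfalso
          have hwij : w i ≠ w j := fun h => hij (hwinj h)
          rcases hcon with h | h
          · exact hwij (by rw [← hu, ← hv, h])
          · subst hu; subst hv
            exact hsind (w i) (hwmem i) (w j) (hwmem j) hwij h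
        · rw [if_neg hv, ptraceK_zero, Matrix.mul_zero]
      · rw [if_neg hu, ptraceK_zero, Matrix.zero_mul]
  -- conclude
  rw [hq]
  refine le_antisymm (csSup_le ⟨indepNum G, hαmem⟩ hub) (le_csSup ⟨indepNum G, hub⟩ hαmem)

end ZeroError
end
end

section
/- Let G be a finite simple graph, let C be a collection of subsets of V(G) with |C| = θ'_e(G) consisting of a minimum-cardinality family of cliques covering all edges of G together with the singleton of each isolated vertex, and let ℓ ≥ θ'_e(G). Then the maximum m ∈ ℕ for which there exists an (ℓ+1)-partite non-signaling conditional probability distribution P(v, î_1, …, î_ℓ | i, c_1, …, c_ℓ) — where Alice's input i and each Bob's output î_k range over [m], Alice's output v ranges over V(G), each Bob's input c_k ranges over C — such that P(v, î_1, …, î_ℓ | i, c_1, …, c_ℓ) = 0 whenever v ∈ c_k for all k ∈ [ℓ] and î_{k'} ≠ i for some k' ∈ [ℓ], is exactly the independence number α(G). -/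
open scoped BigOperators

noncomputable section

namespace ZeroError

variable {V : Type*}

/-- The marginal of the outputs of the selected parties: Alice (output in `V`) is selected
iff `sA = true`, and the Bobs (outputs in `Fin m`) in `S` are selected; we sum `P` over all
outputs which agree with `v₀` (resp. `b₀`) on the selected parties. -/
def nsMarg {m ℓ : ℕ} {V Ct : Type*} [Fintype V] [DecidableEq V] [Fintype Ct]
    (P : Fin m → (Fin ℓ → Ct) → V → (Fin ℓ → Fin m) → ℝ)
    (i : Fin m) (c : Fin ℓ → Ct) (sA : Bool) (S : Finset (Fin ℓ))
    (v₀ : V) (b₀ : Fin ℓ → Fin m) : ℝ :=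
  ∑ v : V, ∑ b : Fin ℓ → Fin m,
    if (sA = true → v = v₀) ∧ ∀ k ∈ S, b k = b₀ k then P i c v b else 0

/-- `P` is an (ℓ+1)-partite non-signaling conditional probability distribution, for one
Alice (input in `Fin m`, output in `V`) and ℓ Bobs (inputs in `Ct`, outputs in `Fin m`):
it is nonnegative, normalized, and for every subset of the parties the marginal
distribution of their outputs depends only on the corresponding inputs. -/
def IsNSCompound {m ℓ : ℕ} {V Ct : Type*} [Fintype V] [DecidableEq V] [Fintype Ct]
    (P : Fin m → (Fin ℓ → Ct) → V → (Fin ℓ → Fin m) → ℝ) : Prop :=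
  (∀ i c v b, 0 ≤ P i c v b) ∧
  (∀ i c, (∑ v : V, ∑ b : Fin ℓ → Fin m, P i c v b) = 1) ∧
  ∀ (sA : Bool) (S : Finset (Fin ℓ)) (i i' : Fin m) (c c' : Fin ℓ → Ct),
    (sA = true → i = i') → (∀ k ∈ S, c k = c' k) →
    ∀ v₀ b₀, nsMarg P i c sA S v₀ b₀ = nsMarg P i' c' sA S v₀ b₀


section Construction

variable {m ℓ : ℕ} [NeZero m] {Ct : Type*} [Fintype V] [DecidableEq V] [Fintype Ct]

def gfun (d : Ct → Fin m) (i : Fin m) (c : Fin ℓ → Ct) (j : Fin m) : Fin ℓ → Fin m :=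
  fun k => i + j - d (c k)

def Pdist (e : Fin m → V) (d : Ct → Fin m) :
    Fin m → (Fin ℓ → Ct) → V → (Fin ℓ → Fin m) → ℝ :=
  fun i c v b => (m : ℝ)⁻¹ * ∑ j : Fin m,
    if v = e j ∧ b = gfun d i c j then 1 else 0

omit [NeZero m] [Fintype Ct] in
theorem Pdist_key (e : Fin m → V) (d : Ct → Fin m) (i : Fin m) (c : Fin ℓ → Ct)
    (F : V → (Fin ℓ → Fin m) → Prop) [∀ v b, Decidable (F v b)] :
    (∑ v : V, ∑ b : Fin ℓ → Fin m, if F v b then Pdist e d i c v b else 0)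
      = (m : ℝ)⁻¹ * ∑ j : Fin m, if F (e j) (gfun d i c j) then 1 else 0 := by
  classical
  have step1 : ∀ (v : V) (b : Fin ℓ → Fin m),
      (if F v b then Pdist e d i c v b else 0)
        = (m : ℝ)⁻¹ * ∑ j : Fin m,
            if F v b ∧ v = e j ∧ b = gfun d i c j then 1 else 0 := by
    intro v b
    by_cases h : F v b <;> simp [h, Pdist]
  calc (∑ v : V, ∑ b : Fin ℓ → Fin m, if F v b then Pdist e d i c v b else 0)
      = ∑ v : V, ∑ b : Fin ℓ → Fin m, (m : ℝ)⁻¹ * ∑ j : Fin m,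
          if F v b ∧ v = e j ∧ b = gfun d i c j then 1 else 0 := by
        exact Finset.sum_congr rfl fun v _ => Finset.sum_congr rfl fun b _ => step1 v b
    _ = (m : ℝ)⁻¹ * ∑ v : V, ∑ b : Fin ℓ → Fin m, ∑ j : Fin m,
          if F v b ∧ v = e j ∧ b = gfun d i c j then 1 else 0 := by
        rw [Finset.mul_sum]
        exact Finset.sum_congr rfl fun v _ => (Finset.mul_sum _ _ _).symm
    _ = (m : ℝ)⁻¹ * ∑ v : V, ∑ j : Fin m, ∑ b : Fin ℓ → Fin m,
          if F v b ∧ v = e j ∧ b = gfun d i c j then 1 else 0 := by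
        congr 1
        exact Finset.sum_congr rfl fun v _ => Finset.sum_comm
    _ = (m : ℝ)⁻¹ * ∑ j : Fin m, ∑ v : V, ∑ b : Fin ℓ → Fin m,
          if F v b ∧ v = e j ∧ b = gfun d i c j then 1 else 0 := by
        congr 1
        exact Finset.sum_comm
    _ = (m : ℝ)⁻¹ * ∑ j : Fin m, if F (e j) (gfun d i c j) then 1 else 0 := by
        congr 1
        refine Finset.sum_congr rfl fun j _ => ?_
        have hiff : ∀ (v : V) (b : Fin ℓ → Fin m),
            (F v b ∧ v = e j ∧ b = gfun d i c j)
              ↔ (v = e j ∧ b = gfun d i c j ∧ F (e j) (gfun d i c j)) := by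
          intro v b
          constructor
          · rintro ⟨h1, rfl, rfl⟩; exact ⟨rfl, rfl, h1⟩
          · rintro ⟨rfl, rfl, h1⟩; exact ⟨h1, rfl, rfl⟩
        simp only [hiff, ite_and]
        simp [Finset.sum_ite_eq']

omit [Fintype Ct] in
theorem Pdist_nsMarg (e : Fin m → V) (d : Ct → Fin m) (i : Fin m) (c : Fin ℓ → Ct)
    (sA : Bool) (S : Finset (Fin ℓ)) (v₀ : V) (b₀ : Fin ℓ → Fin m) [Fintype Ct] :
    nsMarg (Pdist e d) i c sA S v₀ b₀
      = (m : ℝ)⁻¹ * ∑ j : Fin m,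
          if ((sA = true → e j = v₀) ∧ ∀ k ∈ S, i + j - d (c k) = b₀ k) then 1 else 0 := by
  classical
  unfold nsMarg
  rw [Pdist_key e d i c (fun v b => (sA = true → v = v₀) ∧ ∀ k ∈ S, b k = b₀ k)]
  rfl

theorem Pdist_isNS (e : Fin m → V) (d : Ct → Fin m) [Nonempty V] :
    IsNSCompound (ℓ := ℓ) (Pdist e d) := by
  classical
  refine ⟨fun i c v b => ?_, fun i c => ?_, fun sA S i i' c c' hii hcc v₀ b₀ => ?_⟩
  · refine mul_nonneg (by positivity) (Finset.sum_nonneg fun j _ => ?_)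
    split <;> norm_num
  · have h := Pdist_key e d i c (fun _ _ => True)
    simp only [if_true] at h
    rw [h]
    simp [Finset.card_univ, mul_comm]
  · rw [Pdist_nsMarg, Pdist_nsMarg]
    congr 1
    refine Fintype.sum_equiv (Equiv.addRight (i - i')) _ _ fun j => ?_
    have hdc : ∀ k ∈ S, d (c k) = d (c' k) := fun k hk => by rw [hcc k hk]
    refine if_congr (and_congr ?_ ?_) rfl rfl
    · cases sA
      · simp
      · have : i = i' := hii rfl
        subst this
        simp
    · refine forall₂_congr fun k hk => ?_
      rw [← hdc k hk]
      have : i' + (Equiv.addRight (i - i')) j - d (c k) = i + j - d (c k) := by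
        show i' + (j + (i - i')) - d (c k) = i + j - d (c k)
        abel
      rw [this]

theorem Pdist_correct {CC : Finset (Finset V)} (e : Fin m → V) (d : {c // c ∈ CC} → Fin m)
    (hd : ∀ (j : Fin m) (c : {c // c ∈ CC}), e j ∈ c.val → d c = j)
    (i : Fin m) (c : Fin ℓ → {c // c ∈ CC}) (v : V) (b : Fin ℓ → Fin m)
    (hv : ∀ k : Fin ℓ, v ∈ (c k).val) (hb : ∃ k', b k' ≠ i) :
    Pdist e d i c v b = 0 := by
  classical
  obtain ⟨k', hk'⟩ := hb
  unfold Pdist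
  rw [mul_eq_zero]
  right
  refine Finset.sum_eq_zero fun j _ => ?_
  rw [if_neg]
  rintro ⟨rfl, rfl⟩
  apply hk'
  show i + j - d (c k') = i
  rw [hd j (c k') (hv k'), add_sub_cancel_right]

end Construction

theorem card_le_indepNum [Fintype V] [DecidableEq V] {G : SimpleGraph V} {s : Finset V}
    (hs : ∀ u ∈ s, ∀ v ∈ s, u ≠ v → ¬ G.Adj u v) : s.card ≤ indepNum G :=
  le_csSup ⟨Fintype.card V, fun n ⟨t, ht, _⟩ => ht ▸ Finset.card_le_univ t⟩ ⟨s, rfl, hs⟩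

theorem converse [Fintype V] [DecidableEq V] (G : SimpleGraph V) (C : Finset (Finset V))
    {ℓ m : ℕ}
    (hcover : ∀ u v, G.Adj u v → ∃ c ∈ C, u ∈ c ∧ v ∈ c)
    (hiso : ∀ v : V, (∀ u, ¬ G.Adj v u) → {v} ∈ C)
    (σ : Fin ℓ → {c // c ∈ C}) (hσ : ∀ c : {c // c ∈ C}, ∃ k, σ k = c)
    (P : Fin m → (Fin ℓ → {c // c ∈ C}) → V → (Fin ℓ → Fin m) → ℝ)
    (hP : IsNSCompound P)
    (hcorr : ∀ i c v b, (∀ k : Fin ℓ, v ∈ (c k).val) → (∃ k', b k' ≠ i) → P i c v b = 0) :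
    m ≤ indepNum G := by
  classical
  by_cases hm : m = 0
  · omega
  obtain ⟨hnn, hnorm, hns⟩ := hP
  set i₀ : Fin m := ⟨0, Nat.pos_of_ne_zero hm⟩ with hi₀
  by_cases hV : IsEmpty V
  · exfalso
    have := hnorm i₀ σ
    rw [Finset.univ_eq_empty, Finset.sum_empty] at this
    norm_num at this
  obtain ⟨v₀⟩ := not_isEmpty_iff.mp hV
  -- Bobs-only marginal
  have hBob : ∀ (i : Fin m) (b : Fin ℓ → Fin m),
      nsMarg P i σ false Finset.univ v₀ b = ∑ v : V, P i σ v b := by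
    intro i b
    unfold nsMarg
    refine Finset.sum_congr rfl fun v _ => ?_
    have hc : ∀ b' : Fin ℓ → Fin m,
        (((false : Bool) = true → v = v₀) ∧ ∀ k ∈ Finset.univ, b' k = b k) ↔ b' = b := by
      intro b'; simp [funext_iff]
    simp only [hc]
    simp [Finset.sum_ite_eq']
  have hQ : ∀ (i i' : Fin m) (b : Fin ℓ → Fin m),
      ∑ v : V, P i σ v b = ∑ v : V, P i' σ v b := by
    intro i i' b
    have := hns false Finset.univ i i' σ σ (by simp) (fun _ _ => rfl) v₀ b
    rwa [hBob, hBob] at this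
  -- per-Bob correctness in the full joint
  have h1 : ∀ (i : Fin m) (v : V) (b : Fin ℓ → Fin m) (k : Fin ℓ),
      v ∈ (σ k).val → b k ≠ i → P i σ v b = 0 := by
    intro i v b k hv hbk
    have hz : nsMarg P i (fun _ => σ k) true {k} v b = 0 := by
      unfold nsMarg
      refine Finset.sum_eq_zero fun v' _ => Finset.sum_eq_zero fun b' _ => ?_
      split_ifs with h
      · obtain ⟨h1', h2'⟩ := h
        have hv' : v' = v := h1' rfl
        refine hcorr i _ v' b' (fun k'' => by rw [hv']; exact hv) ⟨k, ?_⟩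
        rw [h2' k (Finset.mem_singleton_self k)]
        exact hbk
      · rfl
    have hm' : nsMarg P i σ true {k} v b = 0 := by
      rw [hns true {k} i i σ (fun _ => σ k) (fun _ => rfl)
        (fun k' hk' => by rw [Finset.mem_singleton] at hk'; subst hk'; rfl) v b]
      exact hz
    have hterm : P i σ v b ≤ nsMarg P i σ true {k} v b := by
      unfold nsMarg
      have hinner : ∀ v' : V, 0 ≤ ∑ b' : Fin ℓ → Fin m,
          if (((true : Bool) = true → v' = v) ∧ ∀ k' ∈ ({k} : Finset (Fin ℓ)), b' k' = b k')
            then P i σ v' b' else 0 := by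
        intro v'
        refine Finset.sum_nonneg fun b' _ => ?_
        split_ifs
        · exact hnn _ _ _ _
        · exact le_refl 0
      calc P i σ v b
          = (if (((true : Bool) = true → v = v) ∧ ∀ k' ∈ ({k} : Finset (Fin ℓ)), b k' = b k')
              then P i σ v b else 0) := by rw [if_pos ⟨fun _ => rfl, fun _ _ => rfl⟩]
        _ ≤ ∑ b' : Fin ℓ → Fin m,
            if (((true : Bool) = true → v = v) ∧ ∀ k' ∈ ({k} : Finset (Fin ℓ)), b' k' = b k')
              then P i σ v b' else 0 := by
            refine Finset.single_le_sum (f := fun b' =>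
              if (((true : Bool) = true → v = v) ∧ ∀ k' ∈ ({k} : Finset (Fin ℓ)), b' k' = b k')
                then P i σ v b' else 0) (fun b' _ => ?_) (Finset.mem_univ b)
            split_ifs
            · exact hnn _ _ _ _
            · exact le_refl 0
        _ ≤ ∑ v' : V, ∑ b' : Fin ℓ → Fin m,
            if (((true : Bool) = true → v' = v) ∧ ∀ k' ∈ ({k} : Finset (Fin ℓ)), b' k' = b k')
              then P i σ v' b' else 0 := by
            exact Finset.single_le_sum (f := fun v' => ∑ b' : Fin ℓ → Fin m,
              if (((true : Bool) = true → v' = v) ∧ ∀ k' ∈ ({k} : Finset (Fin ℓ)), b' k' = b k')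
                then P i σ v' b' else 0) (fun v' _ => hinner v') (Finset.mem_univ v)
    have hge := hnn i σ v b
    rw [hm'] at hterm
    linarith
  -- the decoding sets
  set W : Fin m → (Fin ℓ → Fin m) → Finset V :=
    fun i b => Finset.univ.filter (fun v => ∀ k, v ∈ (σ k).val → b k = i) with hWdef
  have hcovV : ∀ v : V, ∃ k, v ∈ (σ k).val := by
    intro v
    have hex : ∃ c ∈ C, v ∈ c := by
      by_cases hv : ∀ u, ¬ G.Adj v u
      · exact ⟨{v}, hiso v hv, Finset.mem_singleton_self v⟩
      · push_neg at hv
        obtain ⟨u, hu⟩ := hv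
        obtain ⟨c, hc, hvc, _⟩ := hcover v u hu
        exact ⟨c, hc, hvc⟩
    obtain ⟨c, hc, hvc⟩ := hex
    obtain ⟨k, hk⟩ := hσ ⟨c, hc⟩
    exact ⟨k, by rw [hk]; exact hvc⟩
  have hmemW : ∀ i b v, v ∈ W i b → ∀ k, v ∈ (σ k).val → b k = i := by
    intro i b v hv
    simpa [hWdef] using hv
  have hsupp : ∀ i b v, v ∉ W i b → P i σ v b = 0 := by
    intro i b v hv
    have hnf : ¬ ∀ k, v ∈ (σ k).val → b k = i := by simpa [hWdef] using hv
    push_neg at hnf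
    obtain ⟨k, hk1, hk2⟩ := hnf
    exact h1 i v b k hk1 hk2
  have hsum1 : ∀ i : Fin m, ∑ b : Fin ℓ → Fin m, ∑ v ∈ W i b, P i σ v b = 1 := by
    intro i
    have h0 := hnorm i σ
    rw [Finset.sum_comm] at h0
    rw [← h0]
    refine Finset.sum_congr rfl fun b _ => ?_
    exact Finset.sum_subset (Finset.subset_univ _) fun v _ hv => hsupp i b v hv
  have hDcard : ∀ b : Fin ℓ → Fin m,
      (Finset.univ.filter (fun i : Fin m => (W i b).Nonempty)).card ≤ indepNum G := by
    intro b
    set D := Finset.univ.filter (fun i : Fin m => (W i b).Nonempty) with hD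
    set sel : Fin m → V := fun i => if h : (W i b).Nonempty then h.choose else v₀ with hsel
    have hselmem : ∀ i ∈ D, sel i ∈ W i b := by
      intro i hi
      rw [hD, Finset.mem_filter] at hi
      rw [hsel]
      simp only [dif_pos hi.2]
      exact hi.2.choose_spec
    have hinj2 : ∀ i i' : Fin m, ∀ v, v ∈ W i b → v ∈ W i' b → i = i' := by
      intro i i' v hv hv'
      obtain ⟨k, hk⟩ := hcovV v
      rw [← hmemW i b v hv k hk, ← hmemW i' b v hv' k hk]
    have hinj : Set.InjOn sel D := by
      intro i hi i' hi' hee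
      exact hinj2 i i' (sel i) (hselmem i hi) (hee ▸ hselmem i' hi')
    have hindset : ∀ u ∈ D.image sel, ∀ w ∈ D.image sel, u ≠ w → ¬ G.Adj u w := by
      intro u hu w hw hne hadj
      obtain ⟨i, hi, rfl⟩ := Finset.mem_image.mp hu
      obtain ⟨i', hi', rfl⟩ := Finset.mem_image.mp hw
      obtain ⟨c, hc, huc, hwc⟩ := hcover _ _ hadj
      obtain ⟨k, hk⟩ := hσ ⟨c, hc⟩
      have hbk1 : b k = i := hmemW i b _ (hselmem i hi) k (by rw [hk]; exact huc)
      have hbk2 : b k = i' := hmemW i' b _ (hselmem i' hi') k (by rw [hk]; exact hwc)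
      exact hne (by rw [hbk1.symm.trans hbk2])
    have hcardim : D.card = (D.image sel).card := (Finset.card_image_of_injOn hinj).symm
    rw [hcardim]
    exact card_le_indepNum hindset
  -- the final count
  have hQnn : ∀ b : Fin ℓ → Fin m, 0 ≤ ∑ v : V, P i₀ σ v b :=
    fun b => Finset.sum_nonneg fun v _ => hnn _ _ _ _
  have key : (m : ℝ) ≤ (indepNum G : ℝ) := by
    have hperb : ∀ b : Fin ℓ → Fin m, ∑ i : Fin m, ∑ v ∈ W i b, P i σ v b
        ≤ (indepNum G : ℝ) * ∑ v : V, P i₀ σ v b := by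
      intro b
      set D := Finset.univ.filter (fun i : Fin m => (W i b).Nonempty) with hD
      have hstep : ∑ i : Fin m, ∑ v ∈ W i b, P i σ v b
          = ∑ i ∈ D, ∑ v ∈ W i b, P i σ v b := by
        symm
        refine Finset.sum_subset (Finset.subset_univ D) fun i _ hi => ?_
        have : ¬ (W i b).Nonempty := by simpa [hD] using hi
        rw [Finset.not_nonempty_iff_eq_empty.mp this, Finset.sum_empty]
      have hle : ∀ i ∈ D, ∑ v ∈ W i b, P i σ v b ≤ ∑ v : V, P i₀ σ v b := by
        intro i _
        calc ∑ v ∈ W i b, P i σ v b ≤ ∑ v : V, P i σ v b :=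
              Finset.sum_le_sum_of_subset_of_nonneg (Finset.subset_univ _)
                (fun v _ _ => hnn _ _ _ _)
          _ = ∑ v : V, P i₀ σ v b := hQ i i₀ b
      calc ∑ i : Fin m, ∑ v ∈ W i b, P i σ v b = ∑ i ∈ D, ∑ v ∈ W i b, P i σ v b := hstep
        _ ≤ ∑ _i ∈ D, ∑ v : V, P i₀ σ v b := Finset.sum_le_sum hle
        _ = D.card * (∑ v : V, P i₀ σ v b) := by rw [Finset.sum_const, nsmul_eq_mul]
        _ ≤ (indepNum G : ℝ) * ∑ v : V, P i₀ σ v b := by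
            exact mul_le_mul_of_nonneg_right (by exact_mod_cast hDcard b) (hQnn b)
    calc (m : ℝ) = ∑ _i : Fin m, (1 : ℝ) := by simp
      _ = ∑ i : Fin m, ∑ b : Fin ℓ → Fin m, ∑ v ∈ W i b, P i σ v b :=
          Finset.sum_congr rfl fun i _ => (hsum1 i).symm
      _ = ∑ b : Fin ℓ → Fin m, ∑ i : Fin m, ∑ v ∈ W i b, P i σ v b := Finset.sum_comm
      _ ≤ ∑ b : Fin ℓ → Fin m, (indepNum G : ℝ) * ∑ v : V, P i₀ σ v b :=
          Finset.sum_le_sum fun b _ => hperb b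
      _ = (indepNum G : ℝ) * ∑ b : Fin ℓ → Fin m, ∑ v : V, P i₀ σ v b := by
          rw [Finset.mul_sum]
      _ = (indepNum G : ℝ) := by rw [Finset.sum_comm, hnorm i₀ σ, mul_one]
  exact_mod_cast key


/-- let `C` be a minimum-cardinality family of cliques covering the edges of
`G` together with the singletons of the isolated vertices (so `|C| = θ'_e(G)`), and let
`ℓ ≥ θ'_e(G)`.  Then the maximum `m` for which there is an (ℓ+1)-partite non-signaling
distribution `P(v, î₁, …, î_ℓ | i, c₁, …, c_ℓ)` which is perfectly correct (it vanishes
whenever `v ∈ c_k` for all `k` but `î_{k'} ≠ i` for some `k'`) equals `α(G)`. -/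
theorem ns_compound_eq_indepNum {V : Type} [Fintype V] [DecidableEq V]
    (G : SimpleGraph V) (C : Finset (Finset V)) (ℓ : ℕ)
    (hclique : ∀ c ∈ C, G.IsClique (c : Set V))
    (hcover : ∀ u v, G.Adj u v → ∃ c ∈ C, u ∈ c ∧ v ∈ c)
    (hiso : ∀ v : V, (∀ u, ¬ G.Adj v u) → {v} ∈ C)
    (hcard : C.card = thetaPrime G)
    (hℓ : thetaPrime G ≤ ℓ) :
    sSup {m | ∃ P : Fin m → (Fin ℓ → {c // c ∈ C}) → V → (Fin ℓ → Fin m) → ℝ,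
        IsNSCompound P ∧
        ∀ i c v b, (∀ k : Fin ℓ, v ∈ (c k).val) → (∃ k', b k' ≠ i) → P i c v b = 0}
      = indepNum G := by

  classical
  set SS := {m | ∃ P : Fin m → (Fin ℓ → {c // c ∈ C}) → V → (Fin ℓ → Fin m) → ℝ,
      IsNSCompound P ∧
      ∀ i c v b, (∀ k : Fin ℓ, v ∈ (c k).val) → (∃ k', b k' ≠ i) → P i c v b = 0} with hSS
  have h0S : (0 : ℕ) ∈ SS :=
    ⟨fun i => i.elim0, ⟨fun i => i.elim0, fun i => i.elim0, fun _ _ i => i.elim0⟩,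
      fun i => i.elim0⟩
  by_cases hV : IsEmpty V
  · -- the degenerate case of an empty vertex set
    have hα : indepNum G = 0 := by
      unfold indepNum
      have hset : {n | ∃ s : Finset V, s.card = n ∧ ∀ u ∈ s, ∀ v ∈ s, u ≠ v → ¬ G.Adj u v}
          = {0} := by
        ext n
        constructor
        · rintro ⟨s, rfl, _⟩
          have hs : s = ∅ := Finset.eq_empty_of_forall_notMem fun x _ => (hV.false x).elim
          simp [hs]
        · rintro rfl
          exact ⟨∅, by simp⟩
      rw [hset, csSup_singleton]
    rw [hα]
    have hθ0 : thetaPrime G = 0 := by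
      have h1 : edgeCliqueCoverNum G = 0 := by
        unfold edgeCliqueCoverNum
        refine Nat.sInf_eq_zero.mpr (Or.inl ?_)
        exact ⟨∅, rfl, fun c hc => absurd hc (Finset.notMem_empty c),
          fun u v _ => (hV.false u).elim⟩
      have h2 : {v : V | ∀ u, ¬ G.Adj v u}.ncard = 0 := by
        have : {v : V | ∀ u, ¬ G.Adj v u} = ∅ := Set.eq_empty_of_isEmpty _
        rw [this, Set.ncard_empty]
      unfold thetaPrime
      omega
    have hCe : C = ∅ := Finset.card_eq_zero.mp (by rw [hcard, hθ0])
    by_cases hl : ℓ = 0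
    · subst hl
      have hub : ∀ x ∈ SS, x ≤ 0 := by
        rintro x ⟨P, ⟨_, hnorm, _⟩, _⟩
        by_contra hx
        have hi : (0 : ℕ) < x := by omega
        have := hnorm ⟨0, hi⟩ (fun k => k.elim0)
        rw [Finset.univ_eq_empty, Finset.sum_empty] at this
        norm_num at this
      exact le_antisymm (csSup_le ⟨0, h0S⟩ hub) (le_csSup ⟨0, hub⟩ h0S)
    · have hall : ∀ x : ℕ, x ∈ SS := by
        intro x
        have hCt : IsEmpty {c // c ∈ C} :=
          ⟨fun c => by rw [hCe] at c; exact Finset.notMem_empty c.1 c.2⟩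
        have hfun : IsEmpty (Fin ℓ → {c // c ∈ C}) :=
          ⟨fun f => hCt.false (f ⟨0, Nat.pos_of_ne_zero hl⟩)⟩
        exact ⟨fun _ _ _ _ => 0,
          ⟨fun i c => (hfun.false c).elim, fun i c => (hfun.false c).elim,
            fun sA S i i' c => (hfun.false c).elim⟩,
          fun i c => (hfun.false c).elim⟩
      rw [Set.eq_univ_of_forall hall]
      exact Set.Infinite.Nat.sSup_eq_zero Set.infinite_univ
  · -- the main case
    have hVne : Nonempty V := not_isEmpty_iff.mp hV
    obtain ⟨vex⟩ := hVne
    haveI : Nonempty V := ⟨vex⟩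
    have hbdd : BddAbove {n | ∃ s : Finset V, s.card = n ∧
        ∀ u ∈ s, ∀ v ∈ s, u ≠ v → ¬ G.Adj u v} :=
      ⟨Fintype.card V, fun n ⟨t, ht, _⟩ => ht ▸ Finset.card_le_univ t⟩
    have hne : Set.Nonempty {n | ∃ s : Finset V, s.card = n ∧
        ∀ u ∈ s, ∀ v ∈ s, u ≠ v → ¬ G.Adj u v} := ⟨0, ∅, by simp⟩
    obtain ⟨s, hscard, hsind⟩ := Nat.sSup_mem hne hbdd
    have hα1 : 1 ≤ indepNum G := by
      have h1 : ({vex} : Finset V).card ≤ indepNum G := by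
        refine card_le_indepNum fun u hu w hw hne' => ?_
        rw [Finset.mem_singleton] at hu hw
        exact absurd (hu.trans hw.symm) hne'
      simpa using h1
    have hCne : C.Nonempty := by
      by_cases hvx : ∀ u, ¬ G.Adj vex u
      · exact ⟨{vex}, hiso vex hvx⟩
      · push_neg at hvx
        obtain ⟨u, hu⟩ := hvx
        obtain ⟨c, hc, _, _⟩ := hcover vex u hu
        exact ⟨c, hc⟩
    have hpos : 0 < C.card := Finset.card_pos.mpr hCne
    have hcard' : C.card ≤ ℓ := le_trans (le_of_eq hcard) hℓ
    set σ : Fin ℓ → {c // c ∈ C} := fun k =>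
      if h : (k : ℕ) < C.card then C.equivFin.symm ⟨k, h⟩ else C.equivFin.symm ⟨0, hpos⟩
      with hσdef
    have hσ : ∀ c : {c // c ∈ C}, ∃ k, σ k = c := by
      intro c
      refine ⟨⟨(C.equivFin c : ℕ), lt_of_lt_of_le (C.equivFin c).2 hcard'⟩, ?_⟩
      rw [hσdef]
      simp only []
      rw [dif_pos (C.equivFin c).2]
      have hfin : (⟨((C.equivFin c) : ℕ), (C.equivFin c).2⟩ : Fin C.card) = C.equivFin c :=
        Fin.ext rfl
      rw [hfin, Equiv.symm_apply_apply]
    have hub : ∀ x ∈ SS, x ≤ indepNum G := by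
      rintro x ⟨P, hP, hcorr⟩
      exact converse G C hcover hiso σ hσ P hP hcorr
    have hsc : s.card = indepNum G := hscard
    haveI : NeZero (indepNum G) := ⟨by omega⟩
    set e : Fin (indepNum G) → V := fun j => (s.equivFin.symm (Fin.cast hsc.symm j) : V)
      with hedef
    have hemem : ∀ j, e j ∈ s := fun j => (s.equivFin.symm _).2
    have heinj : Function.Injective e := by
      intro a b h
      have h2 : s.equivFin.symm (Fin.cast hsc.symm a) = s.equivFin.symm (Fin.cast hsc.symm b) :=
        Subtype.ext h
      have h3 := s.equivFin.symm.injective h2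
      have h4 : (Fin.cast hsc.symm a).val = (Fin.cast hsc.symm b).val := congrArg Fin.val h3
      rw [Fin.coe_cast, Fin.coe_cast] at h4
      exact Fin.ext h4
    have huniq : ∀ (j j' : Fin (indepNum G)) (c : Finset V),
        c ∈ C → e j ∈ c → e j' ∈ c → j = j' := by
      intro j j' c hc h1 h2
      by_contra hne'
      have hne2 : e j ≠ e j' := fun h => hne' (heinj h)
      have hadj : G.Adj (e j) (e j') := hclique c hc h1 h2 hne2
      exact hsind _ (hemem j) _ (hemem j') hne2 hadj
    set d : {c // c ∈ C} → Fin (indepNum G) := fun c =>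
      if h : ∃ j, e j ∈ c.val then h.choose else ⟨0, by omega⟩ with hddef
    have hd : ∀ (j : Fin (indepNum G)) (c : {c // c ∈ C}), e j ∈ c.val → d c = j := by
      intro j c hj
      have hex : ∃ j', e j' ∈ c.val := ⟨j, hj⟩
      rw [hddef]
      simp only [dif_pos hex]
      exact huniq hex.choose j c.val c.2 hex.choose_spec hj
    have hach : indepNum G ∈ SS :=
      ⟨Pdist e d, Pdist_isNS e d,
        fun i c v b hv hb => Pdist_correct e d hd i c v b hv hb⟩
    exact le_antisymm (csSup_le ⟨indepNum G, hach⟩ hub) (le_csSup ⟨indepNum G, hub⟩ hach)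


end ZeroError
end
end

section
/- Let A, B, X, Y be finite nonempty sets and let ℓ ≥ |Y|. If P(a, b | x, y) (a ∈ A, b ∈ B, x ∈ X, y ∈ Y) is a bipartite non-signaling conditional probability distribution that is ℓ-shareable with respect to Bob, then P admits a local hidden variable model: there exist a finite set Λ, a probability distribution Q on Λ, and conditional probability distributions A(a | x, λ) and B(b | y, λ) such that P(a, b | x, y) = Σ_{λ ∈ Λ} Q(λ) A(a | x, λ) B(b | y, λ) for all a, b, x, y. -/
open scoped BigOperators

noncomputable section

namespace NonSignaling

variable {A B X Y : Type*}

/-- `P(a, b | x, y)` is a conditional probability distribution. -/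
def IsCondDistrib [Fintype A] [Fintype B] (P : X → Y → A → B → ℝ) : Prop :=
  (∀ x y a b, 0 ≤ P x y a b) ∧ ∀ x y, ∑ a : A, ∑ b : B, P x y a b = 1

/-- A bipartite conditional distribution is non-signaling: each party's output marginal
does not depend on the other party's input. -/
def IsNS2 [Fintype A] [Fintype B] (P : X → Y → A → B → ℝ) : Prop :=
  (∀ x y y' a, ∑ b : B, P x y a b = ∑ b : B, P x y' a b) ∧
  (∀ x x' y b, ∑ a : A, P x y a b = ∑ a : A, P x' y a b)

/-- The marginal of the outputs of the selected parties of an (ℓ+1)-partite distribution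
`Q(a, b₁, …, b_ℓ | x, y₁, …, y_ℓ)`: Alice is selected iff `sA = true`, and the Bobs in `S`
are selected; we sum over all outputs agreeing with `a₀` (resp. `b₀`) on selected parties. -/
def nsMarg {ℓ : ℕ} [Fintype A] [Fintype B] [DecidableEq A] [DecidableEq B]
    (Q : X → (Fin ℓ → Y) → A → (Fin ℓ → B) → ℝ)
    (x : X) (y : Fin ℓ → Y) (sA : Bool) (S : Finset (Fin ℓ))
    (a₀ : A) (b₀ : Fin ℓ → B) : ℝ :=
  ∑ a : A, ∑ b : Fin ℓ → B,
    if (sA = true → a = a₀) ∧ ∀ k ∈ S, b k = b₀ k then Q x y a b else 0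

/-- `Q` is an (ℓ+1)-partite non-signaling conditional probability distribution (one Alice
and ℓ Bobs): nonnegative, normalized, and for every subset of the parties the marginal
distribution of their outputs depends only on the corresponding inputs. -/
def IsNSMulti {ℓ : ℕ} [Fintype A] [Fintype B] [DecidableEq A] [DecidableEq B]
    (Q : X → (Fin ℓ → Y) → A → (Fin ℓ → B) → ℝ) : Prop :=
  (∀ x y a b, 0 ≤ Q x y a b) ∧
  (∀ x y, (∑ a : A, ∑ b : Fin ℓ → B, Q x y a b) = 1) ∧
  ∀ (sA : Bool) (S : Finset (Fin ℓ)) (x x' : X) (y y' : Fin ℓ → Y),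
    (sA = true → x = x') → (∀ k ∈ S, y k = y' k) →
    ∀ a₀ b₀, nsMarg Q x y sA S a₀ b₀ = nsMarg Q x' y' sA S a₀ b₀

/-- `P` is ℓ-shareable with respect to Bob: there is an (ℓ+1)-partite non-signaling
distribution `Q`, symmetric under permutations of the Bobs, whose marginal on Alice and
any single Bob is `P`. -/
def ShareableBob {ℓ : ℕ} [Fintype A] [Fintype B] [DecidableEq A] [DecidableEq B]
    (P : X → Y → A → B → ℝ) : Prop :=
  ∃ Q : X → (Fin ℓ → Y) → A → (Fin ℓ → B) → ℝ, IsNSMulti Q ∧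
    (∀ (π : Equiv.Perm (Fin ℓ)) (x : X) (y : Fin ℓ → Y) (a : A) (b : Fin ℓ → B),
      Q x (y ∘ π) a (b ∘ π) = Q x y a b) ∧
    (∀ (k : Fin ℓ) (x : X) (y : Fin ℓ → Y) (a : A) (b₁ : B),
      (∑ b : Fin ℓ → B, if b k = b₁ then Q x y a b else 0) = P x (y k) a b₁)

/-- if `ℓ ≥ |Y|` and the bipartite non-signaling distribution `P(a,b|x,y)`
is ℓ-shareable with respect to Bob, then `P` admits a local hidden variable model. -/
theorem shareable_implies_local_hidden_variable
    {A B X Y : Type} [Fintype A] [Fintype B] [Fintype X] [Fintype Y]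
    [DecidableEq A] [DecidableEq B]
    [Nonempty A] [Nonempty B] [Nonempty X] [Nonempty Y]
    (ℓ : ℕ) (hℓ : Fintype.card Y ≤ ℓ)
    (P : X → Y → A → B → ℝ) (hP : IsCondDistrib P) (hNS : IsNS2 P)
    (hSh : ShareableBob (ℓ := ℓ) P) :
    ∃ (n : ℕ) (q : Fin n → ℝ) (QA : X → Fin n → A → ℝ) (QB : Y → Fin n → B → ℝ),
      (∀ l, 0 ≤ q l) ∧ (∑ l, q l = 1) ∧
      (∀ x l, (∀ a, 0 ≤ QA x l a) ∧ ∑ a, QA x l a = 1) ∧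
      (∀ y l, (∀ b, 0 ≤ QB y l b) ∧ ∑ b, QB y l b = 1) ∧
      ∀ a b x y, P x y a b = ∑ l, q l * QA x l a * QB y l b := by
  classical
  obtain ⟨Q, ⟨hQ0, hQ1, hQns⟩, hsym, hmarg⟩ := hSh
  obtain ⟨ι⟩ : Nonempty (Y ↪ Fin ℓ) := by
    apply Function.Embedding.nonempty_of_card_le
    simpa using hℓ
  set yfix : Fin ℓ → Y := Function.invFun ι with hyfixdef
  have hyfix : ∀ y, yfix (ι y) = y := fun y =>
    Function.leftInverse_invFun ι.injective y
  set x₀ := Classical.arbitrary X with hx₀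
  set qf : (Fin ℓ → B) → ℝ := fun f => ∑ a : A, Q x₀ yfix a f with hqfdef
  have hmargNS : ∀ x f, ∑ a : A, Q x yfix a f = qf f := by
    intro x f
    have key : ∀ x', nsMarg Q x' yfix false Finset.univ (Classical.arbitrary A) f
        = ∑ a : A, Q x' yfix a f := by
      intro x'
      unfold nsMarg
      refine Finset.sum_congr rfl fun a _ => ?_
      rw [Finset.sum_eq_single f]
      · simp
      · intro b _ hb
        rw [if_neg]
        rintro ⟨-, h2⟩
        exact hb (funext fun k => h2 k (Finset.mem_univ k))
      · simp
    have h := hQns false Finset.univ x x₀ yfix yfix (by simp) (fun _ _ => rfl)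
      (Classical.arbitrary A) f
    rw [← key x, h, key x₀]
  have hqf0 : ∀ f, 0 ≤ qf f := fun f => Finset.sum_nonneg fun a _ => hQ0 _ _ _ _
  have hQzero : ∀ x f a, qf f = 0 → Q x yfix a f = 0 := by
    intro x f a h0
    have := hmargNS x f
    rw [h0] at this
    exact (Finset.sum_eq_zero_iff_of_nonneg (fun a _ => hQ0 _ _ _ _)).mp this a
      (Finset.mem_univ a)
  have hmain : ∀ x y a b,
      (∑ f : Fin ℓ → B, if f (ι y) = b then Q x yfix a f else 0) = P x y a b := by
    intro x y a b
    have := hmarg (ι y) x yfix a b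
    rwa [hyfix] at this
  set n := Fintype.card (Fin ℓ → B) with hn
  set e := Fintype.equivFin (Fin ℓ → B) with he
  refine ⟨n, fun l => qf (e.symm l),
    fun x l a => if qf (e.symm l) = 0 then (Fintype.card A : ℝ)⁻¹
      else Q x yfix a (e.symm l) / qf (e.symm l),
    fun y l b => if (e.symm l) (ι y) = b then 1 else 0,
    fun l => hqf0 _, ?_, ?_, ?_, ?_⟩
  · rw [Equiv.sum_comp e.symm qf, hqfdef]
    rw [Finset.sum_comm]
    exact hQ1 x₀ yfix
  · intro x l
    by_cases h0 : qf (e.symm l) = 0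
    · constructor
      · intro a; simp only [h0, if_true]; positivity
      · simp only [h0, if_true]
        rw [Finset.sum_const, Finset.card_univ, nsmul_eq_mul]
        rw [mul_inv_cancel₀]
        exact_mod_cast Fintype.card_ne_zero
    · constructor
      · intro a
        simp only [h0, if_false]
        exact div_nonneg (hQ0 _ _ _ _) (hqf0 _)
      · simp only [h0, if_false]
        rw [← Finset.sum_div, hmargNS x (e.symm l), div_self h0]
  · intro y l
    constructor
    · intro b; dsimp only; split <;> norm_num
    · simp
  · intro a b x y
    rw [← hmain x y a b, ← Equiv.sum_comp e.symm
      (fun f => (if f (ι y) = b then Q x yfix a f else 0))]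
    refine Finset.sum_congr rfl fun l _ => ?_
    by_cases h0 : qf (e.symm l) = 0
    · simp only [h0, if_true]
      rw [hQzero x (e.symm l) a h0]
      simp [h0]
    · simp only [h0, if_false]
      by_cases hb : (e.symm l) (ι y) = b
      · simp only [hb, if_true, mul_one]
        rw [mul_div_cancel₀ _ h0]
      · simp [hb]

end NonSignaling
end
end

section
/- For any finite simple graph G with α*(G) > α(G) and any ℓ ≥ 1, the disjoint union of ℓ copies of G satisfies α*(G^{+ℓ}) > α(G^{+ℓ}) (where α(G^{+ℓ}) = ℓ·α(G)). -/
open scoped BigOperators ComplexOrder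
open Matrix

noncomputable section

namespace ZeroError

variable {V W : Type*}

section Aux

private lemma ZE_diag_nn {d : ℕ} {A : Matrix (Fin d) (Fin d) ℂ} (hA : A.PosSemidef) (i : Fin d) :
    0 ≤ A i i := by
  exact hA.diag_nonneg

private lemma ZE_trace_psd_nn {d : ℕ} {A : Matrix (Fin d) (Fin d) ℂ} (hA : A.PosSemidef) :
    0 ≤ A.trace := by
  rw [Matrix.trace]
  exact Finset.sum_nonneg fun i _ => ZE_diag_nn hA i

private lemma ZE_trace_mul_psd_nn {d : ℕ} {A B : Matrix (Fin d) (Fin d) ℂ}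
    (hA : A.PosSemidef) (hB : B.PosSemidef) : 0 ≤ (A * B).trace := by
  obtain ⟨C, rfl⟩ : ∃ C : Matrix (Fin d) (Fin d) ℂ, A = C.conjTranspose * C := by
    open scoped MatrixOrder in
    obtain ⟨X, hX, -, rfl⟩ := CFC.exists_sqrt_of_isSelfAdjoint_of_quasispectrumRestricts hA.isHermitian
      (QuasispectrumRestricts.nnreal_of_nonneg hA.nonneg)
    exact ⟨X, congrArg (· * X) hX.star_eq.symm⟩
  rw [Matrix.mul_assoc, Matrix.trace_mul_comm]
  exact ZE_trace_psd_nn (by simpa [Matrix.mul_assoc] using hB.mul_mul_conjTranspose_same C)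

private lemma ZE_re_trace_mul_psd_nn {d : ℕ} {A B : Matrix (Fin d) (Fin d) ℂ}
    (hA : A.PosSemidef) (hB : B.PosSemidef) : 0 ≤ ((A * B).trace).re :=
  (Complex.le_def.mp (ZE_trace_mul_psd_nn hA hB)).1

private lemma ZE_re_trace_sq_pos {d : ℕ} {ρ : Matrix (Fin d) (Fin d) ℂ}
    (hρ : ρ.IsHermitian) (h1 : ρ.trace = 1) : 0 < ((ρ * ρ).trace).re := by
  have key : ((ρ * ρ).trace).re = ∑ i, ∑ j, Complex.normSq (ρ i j) := by
    rw [Matrix.trace]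
    rw [Complex.re_sum]
    refine Finset.sum_congr rfl fun i _ => ?_
    rw [Matrix.diag_apply, Matrix.mul_apply, Complex.re_sum]
    refine Finset.sum_congr rfl fun j _ => ?_
    have : ρ j i = starRingEnd ℂ (ρ i j) := by
      conv_lhs => rw [← hρ]
      simp [Matrix.conjTranspose_apply]
    rw [this, Complex.mul_conj]
    simp
  rw [key]
  have hne : ∃ i, ρ i i ≠ 0 := by
    by_contra hc
    push_neg at hc
    rw [Matrix.trace] at h1
    simp [hc] at h1
  obtain ⟨i, hi⟩ := hne
  refine Finset.sum_pos' (fun _ _ => Finset.sum_nonneg fun _ _ => Complex.normSq_nonneg _)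
    ⟨i, Finset.mem_univ i, ?_⟩
  refine Finset.sum_pos' (fun _ _ => Complex.normSq_nonneg _) ⟨i, Finset.mem_univ i, ?_⟩
  exact Complex.normSq_pos.mpr hi

private lemma ZE_psd_sum {d : ℕ} {ι : Type*} (s : Finset ι) (f : ι → Matrix (Fin d) (Fin d) ℂ)
    (h : ∀ i ∈ s, (f i).PosSemidef) : (∑ i ∈ s, f i).PosSemidef := by
  classical
  induction s using Finset.induction_on with
  | empty => simpa using Matrix.PosSemidef.zero
  | @insert a s' hx ih =>
    rw [Finset.sum_insert hx]
    exact (h a (Finset.mem_insert_self a s')).add (ih fun i hi => h i (Finset.mem_insert_of_mem hi))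

private lemma ZE_qfeasible_le_card {W : Type} [Fintype W] (G : SimpleGraph W) {m : ℕ}
    (hm : ∃ (d : ℕ) (ρ : Matrix (Fin d) (Fin d) ℂ)
      (σ : Fin m → W → Matrix (Fin d) (Fin d) ℂ),
    ρ.PosSemidef ∧ ρ.trace = 1 ∧ (∀ i u, (σ i u).PosSemidef) ∧
    (∀ i, ∑ u, σ i u = ρ) ∧
    ∀ i j u v, i ≠ j → (u = v ∨ G.Adj u v) → σ i u * σ j v = 0) :
    m ≤ Fintype.card W := by
  classical
  obtain ⟨d, ρ, σ, hρ, hρ1, hσ, hsum, horth⟩ := hm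
  set n := Fintype.card W with hn
  set t : ℝ := ((ρ * ρ).trace).re with ht
  have htpos : 0 < t := ZE_re_trace_sq_pos hρ.isHermitian hρ1
  set S : W → Matrix (Fin d) (Fin d) ℂ := fun u => ∑ i, σ i u with hSdef
  have hSpsd : ∀ u, (S u).PosSemidef := fun u => ZE_psd_sum _ _ fun i _ => hσ i u
  have key3 : ∀ i u, ((σ i u * σ i u).trace).re ≤ ((σ i u * ρ).trace).re := by
    intro i u
    have hsub : ρ - σ i u = ∑ v ∈ Finset.univ.erase u, σ i v := by
      rw [← hsum i, ← Finset.sum_erase_add Finset.univ _ (Finset.mem_univ u)]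
      rw [add_sub_cancel_right]
    have hpsd : (ρ - σ i u).PosSemidef := by
      rw [hsub]; exact ZE_psd_sum _ _ fun v _ => hσ i v
    have h0 : 0 ≤ ((σ i u * (ρ - σ i u)).trace).re := ZE_re_trace_mul_psd_nn (hσ i u) hpsd
    rw [Matrix.mul_sub, Matrix.trace_sub, Complex.sub_re] at h0
    linarith
  have key2 : ∀ u, ((S u * S u).trace).re = ∑ i, ((σ i u * σ i u).trace).re := by
    intro u
    rw [hSdef]
    simp only
    rw [Finset.sum_mul_sum]
    rw [Matrix.trace_sum, Complex.re_sum]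
    refine Finset.sum_congr rfl fun i _ => ?_
    rw [Matrix.trace_sum, Complex.re_sum]
    rw [Finset.sum_eq_single i]
    · intro j _ hji
      rw [horth i j u u (fun h => hji h.symm) (Or.inl rfl), Matrix.trace_zero]
      simp
    · intro h; exact absurd (Finset.mem_univ i) h
  have key1 : ∀ u, 2 * ((S u * ρ).trace).re ≤ ((S u * S u).trace).re + t := by
    intro u
    have hH : (S u - ρ).IsHermitian := (hSpsd u).isHermitian.sub hρ.isHermitian
    have h0 : 0 ≤ (((S u - ρ) * (S u - ρ)).trace).re := by
      have := ZE_trace_psd_nn (Matrix.posSemidef_conjTranspose_mul_self (S u - ρ))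
      rw [hH.eq] at this
      exact (Complex.le_def.mp this).1
    have hexp : (S u - ρ) * (S u - ρ) = S u * S u - S u * ρ - ρ * S u + ρ * ρ := by
      noncomm_ring
    rw [hexp, Matrix.trace_add, Matrix.trace_sub, Matrix.trace_sub,
      Matrix.trace_mul_comm ρ (S u)] at h0
    simp only [Complex.add_re, Complex.sub_re] at h0
    linarith
  have sumS : ∑ u, S u = (m : ℕ) • ρ := by
    rw [hSdef]
    simp only
    rw [Finset.sum_comm]
    simp [hsum]
  have hA : ∑ u, ((S u * ρ).trace).re = m * t := by
    have : ∑ u, (S u * ρ).trace = ((∑ u, S u) * ρ).trace := by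
      rw [Finset.sum_mul, Matrix.trace_sum]
    rw [← Complex.re_sum, this, sumS, Matrix.smul_mul, Matrix.trace_smul]
    simp [ht]
  have hB : ∀ i, ∑ u, ((σ i u * ρ).trace).re = t := by
    intro i
    rw [← Complex.re_sum, ← Matrix.trace_sum, ← Finset.sum_mul, hsum i]
  have main : 2 * (m * t) ≤ m * t + n * t := by
    calc 2 * (m * t) = ∑ u : W, 2 * ((S u * ρ).trace).re := by
          rw [← Finset.mul_sum, hA]
      _ ≤ ∑ u : W, (((S u * S u).trace).re + t) := Finset.sum_le_sum fun u _ => key1 u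
      _ = (∑ u : W, ((S u * S u).trace).re) + n * t := by
          rw [Finset.sum_add_distrib]; simp [hn, mul_comm]
      _ ≤ (∑ u : W, ∑ i, ((σ i u * ρ).trace).re) + n * t := by
          refine add_le_add (Finset.sum_le_sum fun u _ => ?_) le_rfl
          rw [key2 u]
          exact Finset.sum_le_sum fun i _ => key3 i u
      _ = m * t + n * t := by
          rw [Finset.sum_comm]
          simp [hB, Finset.sum_const, mul_comm]
  have : (m : ℝ) ≤ n := by nlinarith
  exact_mod_cast this

private lemma ZE_iset_bdd {V : Type} [Fintype V] (G : SimpleGraph V) :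
    BddAbove {n | ∃ s : Finset V, s.card = n ∧ ∀ u ∈ s, ∀ v ∈ s, u ≠ v → ¬ G.Adj u v} := by
  refine ⟨Fintype.card V, fun n hn => ?_⟩
  obtain ⟨s, hs, -⟩ := hn
  exact hs ▸ s.card_le_univ

private lemma ZE_indepNum_mem {V : Type} [Fintype V] (G : SimpleGraph V) :
    indepNum G ∈ {n | ∃ s : Finset V, s.card = n ∧ ∀ u ∈ s, ∀ v ∈ s, u ≠ v → ¬ G.Adj u v} :=
  Nat.sSup_mem ⟨0, ∅, by simp⟩ (ZE_iset_bdd G)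

private lemma ZE_le_indepNum {V : Type} [Fintype V] (G : SimpleGraph V) {n : ℕ}
    (hn : n ∈ {n | ∃ s : Finset V, s.card = n ∧ ∀ u ∈ s, ∀ v ∈ s, u ≠ v → ¬ G.Adj u v}) :
    n ≤ indepNum G :=
  le_csSup (ZE_iset_bdd G) hn

private lemma ZE_indepNum_copies {V : Type} [Fintype V] (G : SimpleGraph V) (ℓ : ℕ) :
    indepNum (copies G ℓ) = ℓ * indepNum G := by
  classical
  apply le_antisymm
  · obtain ⟨s, hcard, hindep⟩ := ZE_indepNum_mem (copies G ℓ)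
    rw [← hcard]
    have hsplit : s.card = ∑ k : Fin ℓ, (s.filter fun x => x.2 = k).card :=
      Finset.card_eq_sum_card_fiberwise (f := fun x : V × Fin ℓ => x.2) (fun (x : V × Fin ℓ) _ => Finset.mem_univ x.2)
    rw [hsplit]
    have hbound : ∀ k : Fin ℓ, (s.filter fun x => x.2 = k).card ≤ indepNum G := by
      intro k
      set f := (s.filter fun x => x.2 = k).image Prod.fst with hf
      have hcf : (s.filter fun x => x.2 = k).card = f.card := by
        rw [hf, Finset.card_image_of_injOn]
        intro x hx y hy hxy
        simp only [Finset.coe_filter, Set.mem_setOf_eq] at hx hy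
        exact Prod.ext hxy (hx.2.trans hy.2.symm)
      rw [hcf]
      refine ZE_le_indepNum G ⟨f, rfl, ?_⟩
      intro u hu v hv huv hadj
      simp only [hf, Finset.mem_image, Finset.mem_filter] at hu hv
      obtain ⟨x, ⟨hxs, hxk⟩, hxu⟩ := hu
      obtain ⟨y, ⟨hys, hyk⟩, hyv⟩ := hv
      have hxy : x ≠ y := by
        intro h; rw [h, hyv] at hxu; exact huv hxu.symm
      exact hindep x hxs y hys hxy ⟨hxk.trans hyk.symm, by rwa [hxu, hyv]⟩
    calc ∑ k : Fin ℓ, (s.filter fun x => x.2 = k).card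
        ≤ ∑ _k : Fin ℓ, indepNum G := Finset.sum_le_sum fun k _ => hbound k
      _ = ℓ * indepNum G := by simp [Finset.sum_const, mul_comm]
  · obtain ⟨s, hcard, hindep⟩ := ZE_indepNum_mem G
    refine ZE_le_indepNum (copies G ℓ) ⟨s ×ˢ Finset.univ, ?_, ?_⟩
    · rw [Finset.card_product, hcard]
      simp [mul_comm]
    · rintro ⟨u, k⟩ hu ⟨v, k'⟩ hv hne ⟨hkk, hadj⟩
      simp only [Finset.mem_product] at hu hv
      have : u ≠ v := fun h => hne (Prod.ext h hkk)
      exact hindep u hu.1 v hv.1 this hadj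

private lemma ZE_qset_copies {V : Type} [Fintype V] (G : SimpleGraph V) {m a ℓ : ℕ}
    (hℓ : 1 ≤ ℓ) (ha : 0 < a)
    (e : Fin a → V) (einj : Function.Injective e)
    (eind : ∀ p q : Fin a, ¬ G.Adj (e p) (e q))
    (hm : ∃ (d : ℕ) (ρ : Matrix (Fin d) (Fin d) ℂ)
      (σ : Fin m → V → Matrix (Fin d) (Fin d) ℂ),
    ρ.PosSemidef ∧ ρ.trace = 1 ∧ (∀ i u, (σ i u).PosSemidef) ∧
    (∀ i, ∑ u, σ i u = ρ) ∧
    ∀ i j u v, i ≠ j → (u = v ∨ G.Adj u v) → σ i u * σ j v = 0) :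
    ∃ (d : ℕ) (ρ : Matrix (Fin d) (Fin d) ℂ)
      (σ : Fin (m + (ℓ-1)*a) → (V × Fin ℓ) → Matrix (Fin d) (Fin d) ℂ),
    ρ.PosSemidef ∧ ρ.trace = 1 ∧ (∀ i u, (σ i u).PosSemidef) ∧
    (∀ i, ∑ u, σ i u = ρ) ∧
    ∀ i j u v, i ≠ j → (u = v ∨ (copies G ℓ).Adj u v) → σ i u * σ j v = 0 := by
  classical
  obtain ⟨d, ρ, σ, hρ, hρ1, hσ, hsum, horth⟩ := hm
  set z : Fin ℓ := ⟨0, by omega⟩ with hz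
  set c : ℕ → Fin ℓ := fun i =>
    ⟨min ((i - m)/a + 1) (ℓ-1), lt_of_le_of_lt (min_le_right _ _) (by omega)⟩ with hcdef
  set w : ℕ → V := fun i => e ⟨(i - m) % a, Nat.mod_lt _ ha⟩ with hwdef
  have hc1 : ∀ i : ℕ, m ≤ i → i < m + (ℓ-1)*a → ((c i : Fin ℓ) : ℕ) = (i-m)/a + 1 := by
    intro i h1 h2
    have hd : (i-m)/a < ℓ-1 := (Nat.div_lt_iff_lt_mul ha).mpr (by omega)
    simp only [hcdef]
    exact min_eq_left (Nat.succ_le_of_lt hd)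
  have hcz : ∀ i : ℕ, m ≤ i → i < m + (ℓ-1)*a → c i ≠ z := by
    intro i h1 h2 hcontra
    have := congrArg (Fin.val) hcontra
    rw [hc1 i h1 h2] at this
    simp [hz] at this
  set τ : Fin (m + (ℓ-1)*a) → (V × Fin ℓ) → Matrix (Fin d) (Fin d) ℂ := fun i x =>
    if h : (i : ℕ) < m then (if x.2 = z then σ ⟨i, h⟩ x.1 else 0)
    else (if x.2 = c i ∧ x.1 = w i then ρ else 0) with hτ
  refine ⟨d, ρ, τ, hρ, hρ1, ?_, ?_, ?_⟩
  · intro i x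
    simp only [hτ]
    split
    · split
      · exact hσ _ _
      · exact Matrix.PosSemidef.zero
    · split
      · exact hρ
      · exact Matrix.PosSemidef.zero
  · intro i
    rw [Fintype.sum_prod_type]
    by_cases h : (i : ℕ) < m
    · simp only [hτ, dif_pos h]
      have : ∀ u : V, (∑ k : Fin ℓ, if k = z then σ ⟨(i:ℕ), h⟩ u else 0) = σ ⟨(i:ℕ), h⟩ u := by
        intro u; simp
      rw [Finset.sum_congr rfl fun u _ => this u]
      exact hsum _
    · simp only [hτ, dif_neg h]
      have : ∀ u : V, (∑ k : Fin ℓ, if k = c i ∧ u = w i then ρ else 0)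
          = if u = w i then ρ else 0 := by
        intro u
        by_cases hu : u = w i <;> simp [hu]
      rw [Finset.sum_congr rfl fun u _ => this u]
      simp
  · rintro i j x y hij hcase
    have hk : x.2 = y.2 := by
      rcases hcase with rfl | ⟨h1, -⟩
      · rfl
      · exact h1
    have hG : x.1 = y.1 ∨ G.Adj x.1 y.1 := by
      rcases hcase with rfl | ⟨-, h2⟩
      · exact Or.inl rfl
      · exact Or.inr h2
    simp only [hτ]
    by_cases hi : (i : ℕ) < m <;> by_cases hj : (j : ℕ) < m
    · rw [dif_pos hi, dif_pos hj]
      by_cases hx2 : x.2 = z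
      · rw [if_pos hx2, if_pos (hk ▸ hx2)]
        refine horth _ _ _ _ ?_ hG
        intro hcon
        apply hij
        have hval : (i : ℕ) = (j : ℕ) := by simpa using hcon
        exact Fin.ext hval
      · rw [if_neg hx2, zero_mul]
    · rw [dif_pos hi, dif_neg hj]
      by_cases hx2 : x.2 = z
      · have hyne : y.2 ≠ c (j:ℕ) := by
          rw [← hk, hx2]
          exact fun hcon => hcz j (le_of_not_gt hj) j.isLt hcon.symm
        have h' : ¬(y.2 = c (j:ℕ) ∧ y.1 = w (j:ℕ)) := fun hand => hyne hand.1
        rw [if_neg h', mul_zero]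
      · rw [if_neg hx2, zero_mul]
    · rw [dif_neg hi, dif_pos hj]
      by_cases hy2 : y.2 = z
      · have hxne : x.2 ≠ c (i:ℕ) := by
          rw [hk, hy2]
          exact fun hcon => hcz i (le_of_not_gt hi) i.isLt hcon.symm
        have h' : ¬(x.2 = c (i:ℕ) ∧ x.1 = w (i:ℕ)) := fun hand => hxne hand.1
        rw [if_neg h', zero_mul]
      · rw [if_neg hy2, mul_zero]
    · rw [dif_neg hi, dif_neg hj]
      by_cases hx : x.2 = c i ∧ x.1 = w i
      · by_cases hy : y.2 = c j ∧ y.1 = w j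
        · exfalso
          have hcc : c (i:ℕ) = c (j:ℕ) := by rw [← hx.1, hk, hy.1]
          rcases hG with heq | hadj
          · have hww : w (i:ℕ) = w (j:ℕ) := by rw [← hx.2, heq, hy.2]
            have hmod : ((i:ℕ)-m) % a = ((j:ℕ)-m) % a := by
              have h' := einj hww
              simpa using h'
            have hdiv : ((i:ℕ)-m)/a = ((j:ℕ)-m)/a := by
              have h1 := hc1 i (le_of_not_gt hi) i.isLt
              have h2 := hc1 j (le_of_not_gt hj) j.isLt
              have := congrArg Fin.val hcc
              omega
            have h1 := Nat.div_add_mod ((i:ℕ)-m) a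
            have h2 := Nat.div_add_mod ((j:ℕ)-m) a
            rw [hdiv, hmod] at h1
            have : (i:ℕ) = (j:ℕ) := by omega
            exact hij (Fin.ext this)
          · rw [hx.2, hy.2] at hadj
            exact eind _ _ hadj
        · rw [if_neg hy, mul_zero]
      · rw [if_neg hx, zero_mul]

end Aux

/-- if `α*(G) > α(G)` then `α*(G^{+ℓ}) > α(G^{+ℓ})` for every `ℓ ≥ 1`
(where `α(G^{+ℓ}) = ℓ·α(G)`). -/
theorem qIndep_disjoint_union_gt {V : Type} [Fintype V] (G : SimpleGraph V)
    (h : indepNum G < qIndepNum G) (ℓ : ℕ) (hℓ : 1 ≤ ℓ) :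
    indepNum (copies G ℓ) < qIndepNum (copies G ℓ) ∧
    indepNum (copies G ℓ) = ℓ * indepNum G := by
  classical
  have hq0 : (0:ℕ) ∈ {m | ∃ (d : ℕ) (ρ : Matrix (Fin d) (Fin d) ℂ)
      (σ : Fin m → V → Matrix (Fin d) (Fin d) ℂ),
    ρ.PosSemidef ∧ ρ.trace = 1 ∧ (∀ i u, (σ i u).PosSemidef) ∧
    (∀ i, ∑ u, σ i u = ρ) ∧
    ∀ i j u v, i ≠ j → (u = v ∨ G.Adj u v) → σ i u * σ j v = 0} := by
    refine ⟨1, (1 : Matrix (Fin 1) (Fin 1) ℂ), fun i => i.elim0, Matrix.PosSemidef.one, by simp,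
      fun i => i.elim0, fun i => i.elim0, fun i => i.elim0⟩
  have hqbdd : BddAbove {m | ∃ (d : ℕ) (ρ : Matrix (Fin d) (Fin d) ℂ)
      (σ : Fin m → V → Matrix (Fin d) (Fin d) ℂ),
    ρ.PosSemidef ∧ ρ.trace = 1 ∧ (∀ i u, (σ i u).PosSemidef) ∧
    (∀ i, ∑ u, σ i u = ρ) ∧
    ∀ i j u v, i ≠ j → (u = v ∨ G.Adj u v) → σ i u * σ j v = 0} :=
    ⟨Fintype.card V, fun n hn => ZE_qfeasible_le_card G hn⟩
  have hmmem : ∃ (d : ℕ) (ρ : Matrix (Fin d) (Fin d) ℂ)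
      (σ : Fin (qIndepNum G) → V → Matrix (Fin d) (Fin d) ℂ),
    ρ.PosSemidef ∧ ρ.trace = 1 ∧ (∀ i u, (σ i u).PosSemidef) ∧
    (∀ i, ∑ u, σ i u = ρ) ∧
    ∀ i j u v, i ≠ j → (u = v ∨ G.Adj u v) → σ i u * σ j v = 0 :=
    Nat.sSup_mem ⟨0, hq0⟩ hqbdd
  set m := qIndepNum G with hm
  set a := indepNum G with haa
  have hVcard : 1 ≤ Fintype.card V := by
    have := ZE_qfeasible_le_card G hmmem
    omega
  have hVne : Nonempty V := Fintype.card_pos_iff.mp hVcard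
  have ha : 1 ≤ a := by
    obtain ⟨v⟩ := hVne
    refine ZE_le_indepNum G ⟨{v}, Finset.card_singleton v, ?_⟩
    intro u hu w hw huw
    simp only [Finset.mem_singleton] at hu hw
    exact absurd (hu.trans hw.symm) huw
  obtain ⟨s, hscard, hsind⟩ := ZE_indepNum_mem G
  let e : Fin a → V := fun p => ((s.equivFin.symm (Fin.cast hscard.symm p)) : V)
  have emem : ∀ p, e p ∈ s := fun p => (s.equivFin.symm (Fin.cast hscard.symm p)).2
  have einj : Function.Injective e := by
    intro p q hpq
    have h1 := s.equivFin.symm.injective (Subtype.ext hpq)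
    have h2 := congrArg Fin.val h1
    exact Fin.ext (by simpa using h2)
  have eind : ∀ p q : Fin a, ¬ G.Adj (e p) (e q) := by
    intro p q
    by_cases hpq : e p = e q
    · rw [hpq]; exact G.loopless.irrefl _
    · exact hsind _ (emem p) _ (emem q) hpq
  have hcons := ZE_qset_copies G hℓ ha e einj eind hmmem
  have hqle : m + (ℓ-1)*a ≤ qIndepNum (copies G ℓ) :=
    le_csSup ⟨Fintype.card (V × Fin ℓ), fun n hn => ZE_qfeasible_le_card (copies G ℓ) hn⟩ hcons
  have hic : indepNum (copies G ℓ) = ℓ * a := ZE_indepNum_copies G ℓ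
  refine ⟨?_, hic⟩
  rw [hic]
  obtain ⟨b, rfl⟩ : ∃ b, ℓ = b + 1 := ⟨ℓ - 1, by omega⟩
  have hb : b + 1 - 1 = b := by omega
  rw [hb] at hqle
  have hlt : (b+1)*a < m + b*a := by
    have hma : a + 1 ≤ m := h
    calc (b+1)*a + 1 = b*a + (a+1) := by ring
      _ ≤ b*a + m := Nat.add_le_add_left hma _
      _ = m + b*a := by ring
  exact lt_of_lt_of_le hlt hqle

end ZeroError
end
end

section
/- For every finite simple graph G with at least one vertex and every t ≥ 1, the entanglement-assisted independence number of the Cartesian product of G with the complete graph K_t satisfies α*(G □ K_t) ≤ |V(G)|. -/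
open scoped BigOperators ComplexOrder
open Matrix

noncomputable section

namespace ZeroError

variable {V W : Type*}

/-- finrank of a finite sup is at most the sum of finranks. -/
lemma finrank_finset_sup_le {ι K E : Type*} [Field K] [AddCommGroup E] [Module K E]
    [FiniteDimensional K E] (s : Finset ι) (f : ι → Submodule K E) :
    Module.finrank K ↥(s.sup f) ≤ ∑ i ∈ s, Module.finrank K (f i) := by
  classical
  induction s using Finset.cons_induction with
  | empty => simp
  | cons a s ha ih =>
    rw [Finset.sup_cons, Finset.sum_cons]
    have h := Submodule.finrank_sup_add_finrank_inf_eq (f a) (s.sup f)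
    omega

/-- Sum of finranks of pairwise orthogonal submodules equals finrank of their sup. -/
lemma sum_finrank_eq_of_orthogonal {ι E : Type*} [NormedAddCommGroup E]
    [InnerProductSpace ℂ E] [FiniteDimensional ℂ E] (s : Finset ι) (f : ι → Submodule ℂ E)
    (horth : ∀ i ∈ s, ∀ j ∈ s, i ≠ j → f i ≤ (f j)ᗮ) :
    ∑ i ∈ s, Module.finrank ℂ (f i) = Module.finrank ℂ ↥(s.sup f) := by
  classical
  induction s using Finset.cons_induction with
  | empty => rw [Finset.sum_empty, Finset.sup_empty, finrank_bot]
  | cons a s ha ih =>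
    rw [Finset.sup_cons, Finset.sum_cons]
    have hsup : s.sup f ≤ (f a)ᗮ := by
      refine Finset.sup_le fun j hj => ?_
      exact horth j (Finset.mem_cons_of_mem hj) a (Finset.mem_cons_self _ _)
        (fun h => ha (h ▸ hj))
    have hdisj : f a ⊓ s.sup f = ⊥ :=
      ((Submodule.orthogonal_disjoint (f a)).mono_right hsup).eq_bot
    have h := Submodule.finrank_sup_add_finrank_inf_eq (f a) (s.sup f)
    rw [hdisj, finrank_bot] at h
    rw [ih (fun i hi j hj hij => horth i (Finset.mem_cons_of_mem hi) j
      (Finset.mem_cons_of_mem hj) hij)]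
    omega

theorem qIndep_aux {V : Type} [Fintype V] [Nonempty V] (G : SimpleGraph V)
    (t d m : ℕ) (ρ : Matrix (Fin d) (Fin d) ℂ)
    (σ : Fin m → V × Fin t → Matrix (Fin d) (Fin d) ℂ)
    (hρ : ρ.PosSemidef) (htr : ρ.trace = 1) (hσ : ∀ i x, (σ i x).PosSemidef)
    (hsum : ∀ i, ∑ x, σ i x = ρ)
    (horth : ∀ i j u v, i ≠ j →
      (u = v ∨ ((G.Adj u.1 v.1 ∧ u.2 = v.2) ∨ (u.1 = v.1 ∧ u.2 ≠ v.2))) →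
      σ i u * σ j v = 0) :
    m ≤ Fintype.card V := by
  classical
  set τ : Fin m → V → Matrix (Fin d) (Fin d) ℂ := fun i u => ∑ r : Fin t, σ i (u, r) with hτ
  have hτpsd : ∀ i u, (τ i u).PosSemidef := fun i u =>
    Finset.sum_induction _ _ (fun _ _ => Matrix.PosSemidef.add) Matrix.PosSemidef.zero
      (fun r _ => hσ i (u, r))
  have hτsum : ∀ i, ∑ u, τ i u = ρ := by
    intro i
    rw [← hsum i, Fintype.sum_prod_type]
  have hττ : ∀ i j u, i ≠ j → τ i u * τ j u = 0 := by
    intro i j u hij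
    rw [hτ]
    simp only [Finset.sum_mul_sum]
    refine Finset.sum_eq_zero fun r _ => Finset.sum_eq_zero fun s _ => ?_
    by_cases hrs : r = s
    · exact horth i j _ _ hij (Or.inl (by rw [hrs]))
    · exact horth i j _ _ hij (Or.inr (Or.inr ⟨rfl, hrs⟩))
  -- kernel inclusion
  have hker : ∀ i u (z : Fin d → ℂ), ρ *ᵥ z = 0 → τ i u *ᵥ z = 0 := by
    intro i u z hz
    have hmv : (∑ v : V, τ i v) *ᵥ z = ∑ v : V, τ i v *ᵥ z :=
      map_sum (AddMonoidHom.mk' (fun M : Matrix (Fin d) (Fin d) ℂ => M *ᵥ z)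
        (fun M N => Matrix.add_mulVec M N z)) _ _
    have hdp : star z ⬝ᵥ (∑ v : V, τ i v *ᵥ z) = ∑ v : V, star z ⬝ᵥ (τ i v *ᵥ z) :=
      map_sum (AddMonoidHom.mk' (fun w : Fin d → ℂ => star z ⬝ᵥ w)
        (fun a b => dotProduct_add _ _ _)) _ _
    have h0 : ∑ v : V, star z ⬝ᵥ (τ i v *ᵥ z) = 0 := by
      rw [← hdp, ← hmv, hτsum i, hz, dotProduct_zero]
    have hnn : ∀ v ∈ Finset.univ, (0:ℂ) ≤ star z ⬝ᵥ (τ i v *ᵥ z) :=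
      fun v _ => (hτpsd i v).dotProduct_mulVec_nonneg z
    have := (Finset.sum_eq_zero_iff_of_nonneg hnn).mp h0 u (Finset.mem_univ u)
    exact ((hτpsd i u).dotProduct_mulVec_zero_iff z).mp this
  -- the range submodules
  set W : Fin m → V → Submodule ℂ (EuclideanSpace ℂ (Fin d)) :=
    fun i u => LinearMap.range (Matrix.toEuclideanLin (τ i u)) with hW
  set Wρ : Submodule ℂ (EuclideanSpace ℂ (Fin d)) :=
    (LinearMap.ker (Matrix.toEuclideanLin ρ))ᗮ with hWρ
  have hsymmτ : ∀ i u, (Matrix.toEuclideanLin (τ i u)).IsSymmetric :=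
    fun i u => Matrix.isHermitian_iff_isSymmetric.mp (hτpsd i u).1
  have hWle : ∀ i u, W i u ≤ Wρ := by
    rintro i u x ⟨y, rfl⟩
    rw [hWρ, Submodule.mem_orthogonal]
    intro z hz
    have hz' : τ i u *ᵥ (z : Fin d → ℂ) = 0 := hker i u z (congrArg WithLp.ofLp (LinearMap.mem_ker.mp hz))
    have hsy : (inner ℂ z (Matrix.toEuclideanLin (τ i u) y) : ℂ)
        = inner ℂ (Matrix.toEuclideanLin (τ i u) z) y := (hsymmτ i u z y).symm
    rw [hsy]
    have hz0 : Matrix.toEuclideanLin (τ i u) z = 0 := congrArg (WithLp.toLp 2) hz'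
    rw [hz0, inner_zero_left]
  have hWorth : ∀ u, ∀ i j : Fin m, i ≠ j → W i u ≤ (W j u)ᗮ := by
    rintro u i j hij x ⟨y, rfl⟩
    rw [Submodule.mem_orthogonal]
    rintro w ⟨y', rfl⟩
    rw [hsymmτ j u]
    have hz0 : Matrix.toEuclideanLin (τ j u) (Matrix.toEuclideanLin (τ i u) y)
        = (0 : EuclideanSpace ℂ (Fin d)) := by
      show WithLp.toLp 2 (τ j u *ᵥ (τ i u *ᵥ (y : Fin d → ℂ))) = WithLp.toLp 2 0
      rw [mulVec_mulVec, hττ j i u (Ne.symm hij), zero_mulVec]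
    rw [hz0, inner_zero_right]
  -- rank of ρ
  have hR : Module.finrank ℂ Wρ
      = Module.finrank ℂ (LinearMap.range (Matrix.toEuclideanLin ρ)) := by
    have h1 : Module.finrank ℂ (LinearMap.ker (Matrix.toEuclideanLin ρ))
        + Module.finrank ℂ Wρ = Module.finrank ℂ (EuclideanSpace ℂ (Fin d)) := by
      rw [hWρ]
      exact Submodule.finrank_add_finrank_orthogonal _
    have h2 : Module.finrank ℂ (LinearMap.range (Matrix.toEuclideanLin ρ))
        + Module.finrank ℂ (LinearMap.ker (Matrix.toEuclideanLin ρ))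
        = Module.finrank ℂ (EuclideanSpace ℂ (Fin d)) :=
      LinearMap.finrank_range_add_finrank_ker _
    omega
  have hge : ∀ i, Module.finrank ℂ Wρ ≤ ∑ u : V, Module.finrank ℂ (W i u) := by
    intro i
    have hrange : LinearMap.range (Matrix.toEuclideanLin ρ)
        ≤ Finset.univ.sup (fun u => W i u) := by
      rintro x ⟨y, rfl⟩
      have hy : Matrix.toEuclideanLin ρ y = ∑ u : V, Matrix.toEuclideanLin (τ i u) y := by
        rw [← hτsum i, map_sum, LinearMap.sum_apply]
      rw [hy]
      refine Submodule.sum_mem _ fun u _ => ?_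
      exact Finset.le_sup (f := fun u => W i u) (Finset.mem_univ u) ⟨y, rfl⟩
    calc Module.finrank ℂ Wρ
        = Module.finrank ℂ (LinearMap.range (Matrix.toEuclideanLin ρ)) := hR
      _ ≤ Module.finrank ℂ ↥(Finset.univ.sup (fun u => W i u)) :=
          Submodule.finrank_mono hrange
      _ ≤ ∑ u : V, Module.finrank ℂ (W i u) := finrank_finset_sup_le _ _
  have hle : ∀ u : V, ∑ i : Fin m, Module.finrank ℂ (W i u) ≤ Module.finrank ℂ Wρ := by
    intro u
    rw [sum_finrank_eq_of_orthogonal Finset.univ (fun i => W i u)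
      (fun i _ j _ hij => hWorth u i j hij)]
    exact Submodule.finrank_mono (Finset.sup_le fun i _ => hWle i u)
  have hρne : ρ ≠ 0 := by
    intro h
    rw [h, Matrix.trace_zero] at htr
    exact zero_ne_one htr
  have hRpos : 0 < Module.finrank ℂ Wρ := by
    rw [hR]
    rcases Nat.eq_zero_or_pos
      (Module.finrank ℂ (LinearMap.range (Matrix.toEuclideanLin
        (m := Fin d) (n := Fin d) (𝕜 := ℂ) ρ))) with h | h
    · exfalso
      rw [Submodule.finrank_eq_zero, LinearMap.range_eq_bot] at h
      have : ρ = 0 := Matrix.toEuclideanLin.injective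
        (h.trans (map_zero (Matrix.toEuclideanLin
          (m := Fin d) (n := Fin d) (𝕜 := ℂ))).symm)
      exact hρne this
    · exact h
  have hcount : m * Module.finrank ℂ Wρ ≤ Fintype.card V * Module.finrank ℂ Wρ := by
    calc m * Module.finrank ℂ Wρ = ∑ _i : Fin m, Module.finrank ℂ Wρ := by
          simp [Finset.sum_const, mul_comm]
      _ ≤ ∑ i : Fin m, ∑ u : V, Module.finrank ℂ (W i u) :=
          Finset.sum_le_sum fun i _ => hge i
      _ = ∑ u : V, ∑ i : Fin m, Module.finrank ℂ (W i u) := Finset.sum_comm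
      _ ≤ ∑ _u : V, Module.finrank ℂ Wρ := Finset.sum_le_sum fun u _ => hle u
      _ = Fintype.card V * Module.finrank ℂ Wρ := by simp [Finset.sum_const, mul_comm]
  exact Nat.le_of_mul_le_mul_right hcount hRpos


/-- `α*(G □ K_t) ≤ |V(G)|` for every finite simple graph `G` with at least
one vertex and every `t ≥ 1`. -/
theorem qIndep_cartProdK_le {V : Type} [Fintype V] [Nonempty V] (G : SimpleGraph V)
    (t : ℕ) (ht : 1 ≤ t) :
    qIndepNum (cartProdK G t) ≤ Fintype.card V := by
  refine csSup_le' fun m hm => ?_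
  obtain ⟨d, ρ, σ, hρ, htr, hσ, hsum, horth⟩ := hm
  exact qIndep_aux G t d m ρ σ hρ htr hσ hsum horth

end ZeroError
end
end

section
/- For every finite simple graph G with at least one vertex, if t = χ*(G) is the entanglement-assisted chromatic number of G, then α*(G □ K_t) = |V(G)|. -/
open scoped BigOperators ComplexOrder
open Matrix

noncomputable section

namespace ZeroError

variable {V W : Type*}

section Aux

lemma aux_diag_nonneg {n : Type*} [Fintype n] [DecidableEq n] {A : Matrix n n ℂ}
    (hA : A.PosSemidef) (i : n) : 0 ≤ A i i := by
  exact hA.diag_nonneg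

lemma aux_trace_nonneg {n : Type*} [Fintype n] {A : Matrix n n ℂ}
    (hA : A.PosSemidef) : 0 ≤ A.trace := by
  classical
  exact Finset.sum_nonneg fun i _ => aux_diag_nonneg hA i

open scoped MatrixOrder in
lemma aux_trace_mul_nonneg {n : Type*} [Fintype n] {A B : Matrix n n ℂ}
    (hA : A.PosSemidef) (hB : B.PosSemidef) : 0 ≤ (A * B).trace := by
  classical
  obtain ⟨C, hC⟩ := CStarAlgebra.nonneg_iff_eq_star_mul_self.mp hA.nonneg
  obtain ⟨D, hD⟩ := CStarAlgebra.nonneg_iff_eq_star_mul_self.mp hB.nonneg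
  rw [star_eq_conjTranspose] at hC hD
  have h1 : A * B = Cᴴ * (C * (Dᴴ * D)) := by rw [hC, hD, Matrix.mul_assoc]
  have h2 : ((A * B)).trace = ((D * Cᴴ)ᴴ * (D * Cᴴ)).trace := by
    rw [h1, Matrix.trace_mul_comm, Matrix.conjTranspose_mul, Matrix.conjTranspose_conjTranspose]
    rw [Matrix.mul_assoc, Matrix.mul_assoc, Matrix.mul_assoc]
  rw [h2]
  exact aux_trace_nonneg (Matrix.posSemidef_conjTranspose_mul_self _)

lemma aux_vecMulVec_mul_vecMulVec {n : Type*} [Fintype n] (a b c e : n → ℂ) :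
    Matrix.vecMulVec a b * Matrix.vecMulVec c e = (b ⬝ᵥ c) • Matrix.vecMulVec a e := by
  ext i j
  simp only [Matrix.mul_apply, Matrix.vecMulVec_apply, Matrix.smul_apply, smul_eq_mul,
    dotProduct, Finset.sum_mul]
  refine Finset.sum_congr rfl fun k _ => by ring

lemma aux_trace_mul_vecMulVec {n : Type*} [Fintype n] (ρ : Matrix n n ℂ) (x y : n → ℂ) :
    (ρ * Matrix.vecMulVec x (star y)).trace = star y ⬝ᵥ (ρ *ᵥ x) := by
  simp only [Matrix.trace, Matrix.diag_apply, Matrix.mul_apply, Matrix.vecMulVec_apply,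
    dotProduct, Matrix.mulVec, Pi.star_apply, Finset.mul_sum]
  refine Finset.sum_congr rfl fun a _ => Finset.sum_congr rfl fun k _ => by ring

/-- For an orthonormal family `w` and a PSD matrix `ρ`,
`∑ₛ ⟨w s, ρ w s⟩ ≤ Tr ρ`. -/
lemma aux_sum_inner_le_trace {n S : Type*} [Fintype n] [DecidableEq n] [Fintype S]
    [DecidableEq S] {ρ : Matrix n n ℂ} (hρ : ρ.PosSemidef) (w : S → n → ℂ)
    (hw : ∀ s t, star (w s) ⬝ᵥ w t = if s = t then 1 else 0) :
    ∑ s, star (w s) ⬝ᵥ (ρ *ᵥ w s) ≤ ρ.trace := by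
  set P : Matrix n n ℂ := ∑ s, Matrix.vecMulVec (w s) (star (w s)) with hP
  have hPP : P * P = P := by
    rw [hP, Finset.sum_mul_sum]
    have : ∀ s t : S, Matrix.vecMulVec (w s) (star (w s)) * Matrix.vecMulVec (w t) (star (w t))
        = if s = t then Matrix.vecMulVec (w s) (star (w t)) else 0 := by
      intro s t
      rw [aux_vecMulVec_mul_vecMulVec, hw]
      split_ifs <;> simp
    rw [Finset.sum_congr rfl fun s _ => Finset.sum_congr rfl fun t _ => this s t]
    simp
  have hPH : P.IsHermitian := by
    rw [Matrix.IsHermitian, hP, Matrix.conjTranspose_sum]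
    refine Finset.sum_congr rfl fun s _ => ?_
    ext i j
    simp [Matrix.conjTranspose_apply, Matrix.vecMulVec_apply, mul_comm]
  have h1P : (1 - P).PosSemidef := by
    have he : (1 - P)ᴴ * (1 - P) = 1 - P := by
      rw [Matrix.conjTranspose_sub, Matrix.conjTranspose_one, hPH.eq]
      rw [sub_mul, one_mul, mul_sub, mul_one, hPP, sub_self, sub_zero]
    have := Matrix.posSemidef_conjTranspose_mul_self (1 - P)
    rwa [he] at this
  have hnn : 0 ≤ (ρ * (1 - P)).trace := aux_trace_mul_nonneg hρ h1P
  have hexp : (ρ * (1 - P)).trace = ρ.trace - ∑ s, star (w s) ⬝ᵥ (ρ *ᵥ w s) := by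
    rw [mul_sub, mul_one, Matrix.trace_sub, hP, Finset.mul_sum, Matrix.trace_sum]
    congr 1
    exact Finset.sum_congr rfl fun s _ => aux_trace_mul_vecMulVec ρ (w s) (w s)
  rw [hexp] at hnn
  exact sub_nonneg.mp hnn

/-- Key lemma: if `A i` are PSD, pairwise orthogonal (`A i * A j = 0`) and each `≤ ρ`,
then `∑ Tr (A i) ≤ Tr ρ`. -/
lemma aux_key {d m : ℕ} {ρ : Matrix (Fin d) (Fin d) ℂ} (hρ : ρ.PosSemidef)
    {A : Fin m → Matrix (Fin d) (Fin d) ℂ} (hA : ∀ i, (A i).PosSemidef)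
    (hle : ∀ i, (ρ - A i).PosSemidef)
    (horth : ∀ i j, i ≠ j → A i * A j = 0) :
    ∑ i, (A i).trace ≤ ρ.trace := by
  classical
  have hH : ∀ i, (A i).IsHermitian := fun i => (hA i).isHermitian
  set lam : Fin m → Fin d → ℝ := fun i => (hH i).eigenvalues with hlam
  set b : Fin m → Fin d → (Fin d → ℂ) := fun i k => ⇑((hH i).eigenvectorBasis k) with hb
  have heig : ∀ i k, A i *ᵥ b i k = (lam i k : ℂ) • b i k := by
    intro i k
    have := (hH i).mulVec_eigenvectorBasis k
    rw [RCLike.real_smul_eq_coe_smul (K := ℂ)] at this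
    exact this
  have hbo : ∀ i k l, star (b i k) ⬝ᵥ b i l = if k = l then 1 else 0 := by
    intro i k l
    have h0 := (orthonormal_iff_ite (𝕜 := ℂ)).mp (hH i).eigenvectorBasis.orthonormal k l
    rwa [EuclideanSpace.inner_eq_star_dotProduct, dotProduct_comm] at h0
  -- across different i, eigenvectors with nonzero eigenvalues are orthogonal
  have hzero : ∀ i j l, i ≠ j → lam j l ≠ 0 → A i *ᵥ b j l = 0 := by
    intro i j l hij hl
    have h1 : b j l = ((lam j l : ℂ))⁻¹ • (A j *ᵥ b j l) := by
      rw [heig, smul_smul, inv_mul_cancel₀ (by exact_mod_cast hl), one_smul]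
    calc A i *ᵥ b j l = A i *ᵥ (((lam j l : ℂ))⁻¹ • (A j *ᵥ b j l)) := by rw [← h1]
      _ = ((lam j l : ℂ))⁻¹ • ((A i * A j) *ᵥ b j l) := by
          rw [Matrix.mulVec_smul, Matrix.mulVec_mulVec]
      _ = 0 := by rw [horth i j hij]; simp
  have hcross : ∀ i j k l, i ≠ j → lam i k ≠ 0 → lam j l ≠ 0 →
      star (b i k) ⬝ᵥ b j l = 0 := by
    intro i j k l hij hk hl
    have h1 : b i k = ((lam i k : ℂ))⁻¹ • (A i *ᵥ b i k) := by
      rw [heig, smul_smul, inv_mul_cancel₀ (by exact_mod_cast hk), one_smul]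
    rw [h1, star_smul, smul_dotProduct]
    have h2 : star (A i *ᵥ b i k) ⬝ᵥ b j l = star (b i k) ⬝ᵥ (A i *ᵥ b j l) := by
      rw [Matrix.star_mulVec, ← Matrix.dotProduct_mulVec, (hH i).eq]
    rw [h2, hzero i j l hij hl]
    simp
  -- the orthonormal family of all eigenvectors with nonzero eigenvalue
  set S := (Σ i : Fin m, {k : Fin d // lam i k ≠ 0}) with hS
  set w : S → (Fin d → ℂ) := fun s => b s.1 s.2.1 with hwdef
  have hw : ∀ s t : S, star (w s) ⬝ᵥ w t = if s = t then 1 else 0 := by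
    rintro ⟨i, k, hk⟩ ⟨j, l, hl⟩
    by_cases hij : i = j
    · subst hij
      rw [hwdef]
      simp only
      rw [hbo i k l]
      by_cases hkl : k = l
      · subst hkl; simp
      · rw [if_neg hkl,
          if_neg (fun h => hkl (congrArg (fun s : S => (s.snd : Fin d)) h))]
    · rw [hwdef]
      simp only
      rw [hcross i j k l hij hk hl,
        if_neg (fun h => hij (congrArg Sigma.fst h))]
  -- trace of each A i is the sum of its nonzero eigenvalues
  have htr : ∀ i, (A i).trace = ∑ k : {k : Fin d // lam i k ≠ 0}, ((lam i k.1 : ℂ)) := by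
    intro i
    have hspec := (hH i).spectral_theorem
    have h1 : (A i).trace = ∑ k, (lam i k : ℂ) := by
      exact (hH i).trace_eq_sum_eigenvalues
    rw [h1]
    rw [← Finset.sum_filter_of_ne (p := fun k => lam i k ≠ 0)
      (fun k _ h => fun h0 => h (by rw [h0]; simp))]
    rw [← Finset.sum_subtype (f := fun k => ((lam i k : ℂ)))
      (p := fun k => lam i k ≠ 0) (Finset.univ.filter fun k => lam i k ≠ 0)
      (fun k => by simp)]
  -- each nonzero eigenvalue is at most ⟨w, ρ w⟩
  have hlamle : ∀ s : S, ((lam s.1 s.2.1 : ℂ)) ≤ star (w s) ⬝ᵥ (ρ *ᵥ w s) := by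
    rintro ⟨i, k, hk⟩
    have h0 := (hle i).dotProduct_mulVec_nonneg (b i k)
    rw [Matrix.sub_mulVec, dotProduct_sub, heig i k, dotProduct_smul] at h0
    have h1 : star (b i k) ⬝ᵥ b i k = 1 := by rw [hbo i k k, if_pos rfl]
    rw [h1, smul_eq_mul, mul_one] at h0
    have := sub_nonneg.mp h0
    exact this
  calc ∑ i, (A i).trace = ∑ s : S, ((lam s.1 s.2.1 : ℂ)) := by
        rw [Finset.sum_congr rfl fun i _ => htr i]
        rw [← Finset.univ_sigma_univ, Finset.sum_sigma]
    _ ≤ ∑ s : S, star (w s) ⬝ᵥ (ρ *ᵥ w s) := Finset.sum_le_sum fun s _ => hlamle s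
    _ ≤ ρ.trace := aux_sum_inner_le_trace hρ w hw

lemma aux_posSemidef_sum {ι n : Type*} [Fintype n] (s : Finset ι)
    (f : ι → Matrix n n ℂ) (h : ∀ i ∈ s, (f i).PosSemidef) :
    (∑ i ∈ s, f i).PosSemidef :=
  Finset.sum_induction f _ (fun _ _ ha hb => ha.add hb) Matrix.PosSemidef.zero h

end Aux

/-- if `t = χ*(G)` then `α*(G □ K_t) = |V(G)|`. -/
theorem qIndep_cartProdK_qChrom {V : Type} [Fintype V] [Nonempty V] (G : SimpleGraph V)
    (t : ℕ) (ht : t = qChromNum G) :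
    qIndepNum (cartProdK G t) = Fintype.card V := by
  classical
  subst ht
  set t := qChromNum G with htdef
  -- the set defining the quantum chromatic number is nonempty (classical coloring)
  have hchromNe : {m | ∃ (d : ℕ) (ρ : Matrix (Fin d) (Fin d) ℂ)
      (σ : V → Fin m → Matrix (Fin d) (Fin d) ℂ),
      ρ.PosSemidef ∧ ρ.trace = 1 ∧ (∀ x i, (σ x i).PosSemidef) ∧
      (∀ x, ∑ i, σ x i = ρ) ∧
      ∀ x y i, G.Adj x y → σ x i * σ y i = 0}.Nonempty := by
    refine ⟨Fintype.card V, 1, (1 : Matrix (Fin 1) (Fin 1) ℂ),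
      fun x i => if (Fintype.equivFin V) x = i then 1 else 0, Matrix.PosSemidef.one, ?_, ?_, ?_, ?_⟩
    · simp [Matrix.trace_one]
    · intro x i; dsimp only; split_ifs
      exacts [Matrix.PosSemidef.one, Matrix.PosSemidef.zero]
    · intro x; simp
    · intro x y i hxy
      have hne : (Fintype.equivFin V) x ≠ (Fintype.equivFin V) y :=
        fun h => hxy.ne (Equiv.injective _ h)
      dsimp only
      split_ifs with h1 h2
      · exact absurd (h1.trans h2.symm) hne
      all_goals simp
  -- extract a quantum coloring with t colors
  have hmem := Nat.sInf_mem hchromNe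
  rw [← qChromNum] at hmem
  obtain ⟨d₀, ρ₀, σ₀, hρ₀, hTr₀, hpsd₀, hsum₀, horth₀⟩ := hmem
  -- the α* set
  set E : Set ℕ := {m | ∃ (d : ℕ) (ρ : Matrix (Fin d) (Fin d) ℂ)
      (σ : Fin m → V × Fin t → Matrix (Fin d) (Fin d) ℂ),
    ρ.PosSemidef ∧ ρ.trace = 1 ∧ (∀ i u, (σ i u).PosSemidef) ∧
    (∀ i, ∑ u, σ i u = ρ) ∧
    ∀ i j u v, i ≠ j → (u = v ∨ (cartProdK G t).Adj u v) → σ i u * σ j v = 0} with hE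
  have hqIndep : qIndepNum (cartProdK G t) = sSup E := rfl
  -- membership: card V ∈ E
  have hmemE : Fintype.card V ∈ E := by
    set e : Fin (Fintype.card V) ≃ V := (Fintype.equivFin V).symm with hedef
    refine ⟨d₀, ρ₀, fun i p => if p.1 = e i then σ₀ p.1 p.2 else 0, hρ₀, hTr₀, ?_, ?_, ?_⟩
    · intro i u; dsimp only; split_ifs
      exacts [hpsd₀ _ _, Matrix.PosSemidef.zero]
    · intro i
      rw [Fintype.sum_prod_type]
      have h1 : ∀ v : V, ∑ j : Fin t, (if v = e i then σ₀ v j else 0)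
          = if v = e i then ∑ j : Fin t, σ₀ v j else 0 := by
        intro v; split_ifs <;> simp
      rw [Finset.sum_congr rfl fun v _ => h1 v, Finset.sum_ite_eq' Finset.univ (e i)]
      simpa using hsum₀ (e i)
    · rintro i j u v hij hadj
      dsimp only
      split_ifs with h1 h2
      · -- u.1 = e i, v.1 = e j, so u.1 ≠ v.1
        have hne : u.1 ≠ v.1 := by
          rw [h1, h2]; exact fun h => hij (e.injective h)
        rcases hadj with rfl | hadj
        · exact absurd rfl hne
        · rcases hadj with ⟨hGadj, hsame⟩ | ⟨heq, -⟩
          · rw [← hsame]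
            exact horth₀ u.1 v.1 u.2 hGadj
          · exact absurd heq hne
      all_goals simp
  -- upper bound : every m ∈ E satisfies m ≤ card V
  have hub : ∀ m ∈ E, m ≤ Fintype.card V := by
    intro m hm
    obtain ⟨d, ρ, σ, hρ, hTr, hpsd, hsum, horth⟩ := hm
    set A : Fin m → V → Matrix (Fin d) (Fin d) ℂ := fun i v => ∑ j : Fin t, σ i (v, j) with hA
    have hApsd : ∀ i v, (A i v).PosSemidef :=
      fun i v => aux_posSemidef_sum _ _ (fun j _ => hpsd i (v, j))
    have hsum' : ∀ i, ∑ v, A i v = ρ := by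
      intro i; rw [← hsum i, Fintype.sum_prod_type]
    have hle : ∀ i v, (ρ - A i v).PosSemidef := by
      intro i v
      have h1 : A i v + ∑ w ∈ Finset.univ.erase v, A i w = ρ := by
        rw [Finset.add_sum_erase _ _ (Finset.mem_univ v)]
        exact hsum' i
      have h2 : ρ - A i v = ∑ w ∈ Finset.univ.erase v, A i w := by
        rw [← h1, add_sub_cancel_left]
      rw [h2]
      exact aux_posSemidef_sum _ _ (fun w _ => hApsd i w)
    have horthA : ∀ v : V, ∀ i j, i ≠ j → A i v * A j v = 0 := by
      intro v i j hij
      rw [hA]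
      dsimp only
      rw [Finset.sum_mul_sum]
      refine Finset.sum_eq_zero fun a _ => Finset.sum_eq_zero fun c _ => ?_
      refine horth i j (v, a) (v, c) hij ?_
      by_cases hac : a = c
      · exact Or.inl (by rw [hac])
      · exact Or.inr (Or.inr ⟨rfl, hac⟩)
    have hkey : ∀ v : V, ∑ i, (A i v).trace ≤ ρ.trace :=
      fun v => aux_key hρ (fun i => hApsd i v) (fun i => hle i v) (fun i j h => horthA v i j h)
    have hmain : (m : ℂ) ≤ (Fintype.card V : ℂ) := by
      have h1 : (m : ℂ) = ∑ v : V, ∑ i : Fin m, (A i v).trace := by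
        rw [Finset.sum_comm]
        have : ∀ i : Fin m, ∑ v : V, (A i v).trace = 1 := by
          intro i; rw [← Matrix.trace_sum, hsum' i, hTr]
        rw [Finset.sum_congr rfl fun i _ => this i]
        simp
      rw [h1]
      calc ∑ v : V, ∑ i : Fin m, (A i v).trace ≤ ∑ _v : V, (1 : ℂ) :=
            Finset.sum_le_sum fun v _ => (hTr ▸ hkey v)
        _ = (Fintype.card V : ℂ) := by simp
    exact_mod_cast hmain
  rw [hqIndep]
  exact le_antisymm (csSup_le ⟨_, hmemE⟩ hub) (le_csSup ⟨Fintype.card V, hub⟩ hmemE)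

end ZeroError
end
end
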